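/- arXiv:1911.12727 — 3 statements merged into one kernel-verified Lean document; each statement's English description precedes it below -/
import Mathlib

section
/- The additional flows commute with all the flows of the extended KP hierarchy: for every m ≥ 0, p ∈ ℤ, k ≥ 1, for β̇_{mp} ∈ {β_{mp}, β̂_{mp}} and t̄_k ∈ {t_k, t̂_k}, one has [∂/∂β̇_{mp}, ∂/∂t̄_k] Φ̃ = 0, where Φ̃ = Φ or Φ̂. -/
/-!
STATEMENT 16: The additional flows ∂/∂β_{mp}, ∂/∂β̂_{mp} commute with all the
flows ∂/∂t_k, ∂/∂t̂_k of the extended KP hierarchy when applied to Φ and Φ̂: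
[∂/∂β̇_{mp}, ∂/∂t̄_k]Φ̃ = 0 for every m ≥ 0, p ∈ ℤ, k ≥ 1.
-/


namespace Stmt16

variable {D : Type*} [Ring D]

structure IsDer (T : D → D) : Prop where
  add : ∀ x y, T (x + y) = T x + T y
  mul : ∀ x y, T (x * y) = T x * y + x * T y

namespace IsDer

variable {T : D → D}

theorem zero (h : IsDer T) : T 0 = 0 := by
  have h0 := h.add 0 0
  rw [add_zero] at h0
  exact right_eq_add.mp h0

theorem neg (h : IsDer T) (x : D) : T (-x) = -T x := by
  have h0 := h.add x (-x)
  rw [add_neg_cancel, h.zero] at h0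
  exact eq_neg_of_add_eq_zero_right h0.symm

theorem sub (h : IsDer T) (x y : D) : T (x - y) = T x - T y := by
  rw [sub_eq_add_neg, h.add, h.neg, ← sub_eq_add_neg]

theorem one (h : IsDer T) : T 1 = 0 := by
  have h0 := h.mul 1 1
  simp only [mul_one, one_mul] at h0
  exact right_eq_add.mp h0

theorem unit_inv (h : IsDer T) (u : Dˣ) :
    T ↑u⁻¹ = -(↑u⁻¹ * T ↑u * ↑u⁻¹) := by
  have h1 := h.mul ↑u ↑u⁻¹
  rw [u.mul_inv, h.one] at h1
  have h2 : (↑u⁻¹ : D) * (0:D) = ↑u⁻¹ * (T ↑u * ↑u⁻¹ + ↑u * T ↑u⁻¹) := by rw [← h1]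
  rw [mul_zero, mul_add, ← mul_assoc, ← mul_assoc, u.inv_mul, one_mul] at h2
  exact eq_neg_of_add_eq_zero_right h2.symm

theorem comm_pow (h : IsDer T) (W x : D) (hx : T x = W * x - x * W) :
    ∀ n : ℕ, T (x ^ n) = W * x ^ n - x ^ n * W
  | 0 => by simp [h.one]
  | (n+1) => by
      rw [pow_succ, h.mul, comm_pow h W x hx n, hx]
      noncomm_ring

theorem comm_unit_inv (h : IsDer T) (W : D) (u : Dˣ) (hu : T ↑u = W * ↑u - ↑u * W) :
    T ↑u⁻¹ = W * ↑u⁻¹ - ↑u⁻¹ * W := by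
  rw [h.unit_inv u, hu]
  have h1 : (↑u⁻¹:D) * (W * ↑u - ↑u * W) * ↑u⁻¹
      = ↑u⁻¹ * W * (↑u * ↑u⁻¹) - (↑u⁻¹ * ↑u) * (W * ↑u⁻¹) := by noncomm_ring
  rw [h1, u.mul_inv, u.inv_mul, mul_one, one_mul]
  noncomm_ring

theorem comm_zpow (h : IsDer T) (W : D) (u : Dˣ) (hu : T ↑u = W * ↑u - ↑u * W) :
    ∀ n : ℤ, T ↑(u ^ n) = W * ↑(u ^ n) - ↑(u ^ n) * W
  | Int.ofNat n => by
      rw [Int.ofNat_eq_natCast, zpow_natCast, Units.val_pow_eq_pow_val]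
      exact h.comm_pow W ↑u hu n
  | Int.negSucc n => by
      rw [zpow_negSucc]
      exact h.comm_unit_inv W _
        (by rw [Units.val_pow_eq_pow_val]; exact h.comm_pow W ↑u hu (n+1))

end IsDer

theorem conj_mul (Φ : Dˣ) (x y : D) :
    (↑Φ * x * ↑Φ⁻¹) * (↑Φ * y * ↑Φ⁻¹) = ↑Φ * (x * y) * ↑Φ⁻¹ := by
  have h : (↑Φ⁻¹ : D) * ↑Φ = 1 := Φ.inv_mul
  calc (↑Φ * x * ↑Φ⁻¹) * (↑Φ * y * ↑Φ⁻¹)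
      = ↑Φ * x * ((↑Φ⁻¹ * ↑Φ) * (y * ↑Φ⁻¹)) := by noncomm_ring
    _ = ↑Φ * (x * y) * ↑Φ⁻¹ := by rw [h, one_mul]; noncomm_ring

theorem conj_sub (Φ : Dˣ) (x y : D) :
    ↑Φ * x * ↑Φ⁻¹ - ↑Φ * y * ↑Φ⁻¹ = ↑Φ * (x - y) * ↑Φ⁻¹ := by noncomm_ring

theorem conj_one (Φ : Dˣ) : (↑Φ:D) * 1 * ↑Φ⁻¹ = 1 := by rw [mul_one, Φ.mul_inv]

theorem conj_pow (Φ : Dˣ) (x : D) : ∀ n : ℕ, (↑Φ * x * ↑Φ⁻¹) ^ n = ↑Φ * x ^ n * ↑Φ⁻¹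
  | 0 => by rw [pow_zero, pow_zero, mul_one, Φ.mul_inv]
  | (n+1) => by rw [pow_succ, conj_pow Φ x n, conj_mul, ← pow_succ]

theorem IsDer.conj (h : IsDer T) (Φ : Dˣ) (W ξ : D) (hΦ : T ↑Φ = W * ↑Φ) :
    T (↑Φ * ξ * ↑Φ⁻¹)
      = W * (↑Φ * ξ * ↑Φ⁻¹) - (↑Φ * ξ * ↑Φ⁻¹) * W + ↑Φ * T ξ * ↑Φ⁻¹ := by
  have hinv : T ↑Φ⁻¹ = -(↑Φ⁻¹ * W) := by
    rw [h.unit_inv Φ, hΦ]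
    have h1 : (↑Φ⁻¹:D) * (W * ↑Φ) * ↑Φ⁻¹ = ↑Φ⁻¹ * W * (↑Φ * ↑Φ⁻¹) := by noncomm_ring
    rw [h1, Φ.mul_inv, mul_one]
  rw [h.mul, h.mul, hΦ, hinv]
  noncomm_ring

theorem IsDer.conj_comm0 (h : IsDer T) (Φ : Dˣ) (W ξ : D) (hΦ : T ↑Φ = W * ↑Φ)
    (hξ : T ξ = 0) :
    T (↑Φ * ξ * ↑Φ⁻¹) = W * (↑Φ * ξ * ↑Φ⁻¹) - (↑Φ * ξ * ↑Φ⁻¹) * W := by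
  rw [h.conj Φ W ξ hΦ, hξ, mul_zero, zero_mul, add_zero]

theorem IsDer.comm_prod (h : IsDer T) (G Mx : D) (u : Dˣ)
    (hM : T Mx = G * Mx - Mx * G) (hu : T ↑u = G * ↑u - ↑u * G) (m : ℕ) (p : ℤ) :
    T (Mx ^ m * ↑(u ^ p)) = G * (Mx ^ m * ↑(u ^ p)) - (Mx ^ m * ↑(u ^ p)) * G := by
  rw [h.mul, h.comm_pow G Mx hM m, h.comm_zpow G u hu p]
  noncomm_ring

theorem comm_shift {T : D → D} (v W G Y : D) (hTv : T v = W * v - v * W)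
    (hW : W = G - Y) (hYv : Y * v = v * Y) : T v = G * v - v * G := by
  rw [hTv, hW, sub_mul, mul_sub, hYv]
  noncomm_ring

theorem bracket_pow_one (u : Dˣ) (Mx : D) (hc : ↑u * Mx - Mx * ↑u = 1) :
    ∀ j : ℕ, Mx * (↑u:D) ^ (j+1) - (↑u:D) ^ (j+1) * Mx = -((((j:ℕ):D) + 1) * (↑u:D) ^ j)
  | 0 => by
      rw [pow_one, pow_zero,
        show Mx * (↑u:D) - ↑u * Mx = -(↑u * Mx - Mx * ↑u) from by noncomm_ring, hc]
      norm_num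
  | (j+1) => by
      have IH := bracket_pow_one u Mx hc j
      have hA := sub_eq_iff_eq_add.mp IH
      have hB : (↑u:D) * Mx = 1 + Mx * ↑u := sub_eq_iff_eq_add.mp hc
      have e1 : Mx * (↑u:D) ^ (j+1+1) = Mx * (↑u:D) ^ (j+1) * ↑u := by
        rw [mul_assoc, ← pow_succ]
      have e2 : (↑u:D) ^ (j+1+1) * Mx = (↑u:D) ^ (j+1) * (1 + Mx * ↑u) := by
        rw [pow_succ, mul_assoc, hB]
      rw [e1, hA, e2, add_mul, neg_mul, mul_assoc (((j:ℕ):D)+1) ((↑u:D)^j) ↑u, ← pow_succ]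
      push_cast
      noncomm_ring

theorem bracket_pow_sq (u : Dˣ) (Mx : D) (hc : ↑u * Mx - Mx * ↑u = -((↑u:D) * ↑u)) :
    ∀ j : ℕ, Mx * (↑u:D) ^ (j+1) - (↑u:D) ^ (j+1) * Mx = (((j:ℕ):D) + 1) * (↑u:D) ^ (j+2)
  | 0 => by
      rw [pow_one,
        show Mx * (↑u:D) - ↑u * Mx = -(↑u * Mx - Mx * ↑u) from by noncomm_ring, hc,
        neg_neg]
      norm_num [pow_two]
  | (j+1) => by
      have IH := bracket_pow_sq u Mx hc j
      have hA := sub_eq_iff_eq_add.mp IH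
      have hB : (↑u:D) * Mx = -((↑u:D) * ↑u) + Mx * ↑u := sub_eq_iff_eq_add.mp hc
      have e1 : Mx * (↑u:D) ^ (j+1+1) = Mx * (↑u:D) ^ (j+1) * ↑u := by
        rw [mul_assoc, ← pow_succ]
      have e2 : (↑u:D) ^ (j+1+1) * Mx = (↑u:D) ^ (j+1) * (-((↑u:D) * ↑u) + Mx * ↑u) := by
        rw [pow_succ, mul_assoc, hB]
      rw [e1, hA, e2, add_mul, mul_assoc (((j:ℕ):D)+1) ((↑u:D)^(j+2)) ↑u, ← pow_succ]
      push_cast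
      have e3 : (↑u:D)^(j+1) * ((↑u:D) * (↑u:D)) = (↑u:D)^(j+1+2) := by
        rw [← mul_assoc, ← pow_succ, ← pow_succ]
      rw [mul_add, mul_neg, e3]
      noncomm_ring

theorem conj_nat_cast (Φ : Dˣ) (c : ℕ) (w : D) :
    (↑Φ:D) * ((c:D) * w) * ↑Φ⁻¹ = (c:D) * ((↑Φ:D) * w * ↑Φ⁻¹) := by
  calc (↑Φ:D) * ((c:D) * w) * ↑Φ⁻¹ = ((↑Φ:D) * (c:D)) * (w * ↑Φ⁻¹) := by noncomm_ring
    _ = ((c:D) * ↑Φ) * (w * ↑Φ⁻¹) := by rw [← (Nat.cast_commute c ((↑Φ:D))).eq]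
    _ = (c:D) * ((↑Φ:D) * w * ↑Φ⁻¹) := by noncomm_ring

section Final
variable (pos : D → D)

theorem final_phi_T (hadd : ∀ x y : D, pos (x + y) = pos x + pos y)
    (psub : ∀ x y : D, pos (x - y) = pos x - pos y)
    {D1 D2 : D → D} (h1 : IsDer D1) (h2 : IsDer D2)
    (h1pos : ∀ x, D1 (pos x) = pos (D1 x)) (h2pos : ∀ x, D2 (pos x) = pos (D2 x))
    (Φd X Y : D)
    (hca : pos (pos Y * pos X) = pos Y * pos X)
    (hac : pos (pos X * pos Y) = pos X * pos Y)
    (hdb : pos ((Y - pos Y) * (X - pos X)) = 0)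
    (hbd : pos ((X - pos X) * (Y - pos Y)) = 0)
    (hD1Φ : D1 Φd = -(X - pos X) * Φd)
    (hD2Φ : D2 Φd = -(Y - pos Y) * Φd)
    (hD1Y : D1 Y = -(X - pos X) * Y - Y * -(X - pos X))
    (hD2X : D2 X = pos Y * X - X * pos Y) :
    D1 (D2 Φd) = D2 (D1 Φd) := by
  rw [hD2Φ, hD1Φ, h1.mul, h1.neg, h1.sub, h1pos, hD1Y, hD1Φ,
      h2.mul, h2.neg, h2.sub, h2pos, hD2X, hD2Φ]
  have e1 : -(X - pos X) * Y - Y * -(X - pos X)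
      = (pos Y * (X - pos X) + (Y - pos Y) * (X - pos X))
        - ((X - pos X) * pos Y + (X - pos X) * (Y - pos Y)) := by noncomm_ring
  have e2 : pos Y * X - X * pos Y
      = (pos Y * pos X + pos Y * (X - pos X))
        - (pos X * pos Y + (X - pos X) * pos Y) := by noncomm_ring
  rw [e1, e2]
  simp only [hadd, psub, hca, hac, hdb, hbd]
  noncomm_ring

theorem final_phi_Th (hadd : ∀ x y : D, pos (x + y) = pos x + pos y)
    (psub : ∀ x y : D, pos (x - y) = pos x - pos y)
    {D1 D2 : D → D} (h1 : IsDer D1) (h2 : IsDer D2)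
    (h1pos : ∀ x, D1 (pos x) = pos (D1 x)) (h2pos : ∀ x, D2 (pos x) = pos (D2 x))
    (Φd X Y : D)
    (hca : pos (pos Y * pos X) = pos Y * pos X)
    (hac : pos (pos X * pos Y) = pos X * pos Y)
    (hdb : pos ((Y - pos Y) * (X - pos X)) = 0)
    (hbd : pos ((X - pos X) * (Y - pos Y)) = 0)
    (hD1Φ : D1 Φd = -(X - pos X) * Φd)
    (hD2Φ : D2 Φd = -(Y - pos Y) * Φd)
    (hD1Y : D1 Y = pos X * Y - Y * pos X)
    (hD2X : D2 X = -(Y - pos Y) * X - X * -(Y - pos Y)) :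
    D1 (D2 Φd) = D2 (D1 Φd) := by
  rw [hD2Φ, hD1Φ, h1.mul, h1.neg, h1.sub, h1pos, hD1Y, hD1Φ,
      h2.mul, h2.neg, h2.sub, h2pos, hD2X, hD2Φ]
  have e1 : pos X * Y - Y * pos X
      = (pos X * pos Y + pos X * (Y - pos Y))
        - (pos Y * pos X + (Y - pos Y) * pos X) := by noncomm_ring
  have e2 : -(Y - pos Y) * X - X * -(Y - pos Y)
      = (pos X * (Y - pos Y) + (X - pos X) * (Y - pos Y))
        - ((Y - pos Y) * pos X + (Y - pos Y) * (X - pos X)) := by noncomm_ring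
  rw [e1, e2]
  simp only [hadd, psub, hca, hac, hdb, hbd]
  noncomm_ring

theorem final_phih_T (hadd : ∀ x y : D, pos (x + y) = pos x + pos y)
    (psub : ∀ x y : D, pos (x - y) = pos x - pos y)
    {D1 D2 : D → D} (h1 : IsDer D1) (h2 : IsDer D2)
    (h1pos : ∀ x, D1 (pos x) = pos (D1 x)) (h2pos : ∀ x, D2 (pos x) = pos (D2 x))
    (Φhd X Y Z : D)
    (hca : pos (pos Y * pos X) = pos Y * pos X)
    (hac : pos (pos X * pos Y) = pos X * pos Y)
    (hdb : pos ((Y - pos Y) * (X - pos X)) = 0)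
    (hbd : pos ((X - pos X) * (Y - pos Y)) = 0)
    (hD1Φ : D1 Φhd = pos X * Φhd)
    (hD2Φ : D2 Φhd = (pos Y - Z) * Φhd)
    (hD1Y : D1 Y = -(X - pos X) * Y - Y * -(X - pos X))
    (hD1Z : D1 Z = pos X * Z - Z * pos X)
    (hD2X : D2 X = pos Y * X - X * pos Y) :
    D1 (D2 Φhd) = D2 (D1 Φhd) := by
  rw [hD2Φ, hD1Φ, h1.mul, h1.sub, h1pos, hD1Y, hD1Z, hD1Φ,
      h2.mul, h2pos, hD2X, hD2Φ]
  have e1 : -(X - pos X) * Y - Y * -(X - pos X)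
      = (pos Y * (X - pos X) + (Y - pos Y) * (X - pos X))
        - ((X - pos X) * pos Y + (X - pos X) * (Y - pos Y)) := by noncomm_ring
  have e2 : pos Y * X - X * pos Y
      = (pos Y * pos X + pos Y * (X - pos X))
        - (pos X * pos Y + (X - pos X) * pos Y) := by noncomm_ring
  rw [e1, e2]
  simp only [hadd, psub, hca, hac, hdb, hbd]
  noncomm_ring

theorem final_phih_Th (hadd : ∀ x y : D, pos (x + y) = pos x + pos y)
    (psub : ∀ x y : D, pos (x - y) = pos x - pos y)
    {D1 D2 : D → D} (h1 : IsDer D1) (h2 : IsDer D2)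
    (h1pos : ∀ x, D1 (pos x) = pos (D1 x)) (h2pos : ∀ x, D2 (pos x) = pos (D2 x))
    (Φhd X Y : D)
    (hca : pos (pos Y * pos X) = pos Y * pos X)
    (hac : pos (pos X * pos Y) = pos X * pos Y)
    (hdb : pos ((Y - pos Y) * (X - pos X)) = 0)
    (hbd : pos ((X - pos X) * (Y - pos Y)) = 0)
    (hD1Φ : D1 Φhd = pos X * Φhd)
    (hD2Φ : D2 Φhd = pos Y * Φhd)
    (hD1Y : D1 Y = pos X * Y - Y * pos X)
    (hD2X : D2 X = -(Y - pos Y) * X - X * -(Y - pos Y)) :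
    D1 (D2 Φhd) = D2 (D1 Φhd) := by
  rw [hD2Φ, hD1Φ, h1.mul, h1pos, hD1Y, hD1Φ,
      h2.mul, h2pos, hD2X, hD2Φ]
  have e1 : pos X * Y - Y * pos X
      = (pos X * pos Y + pos X * (Y - pos Y))
        - (pos Y * pos X + (Y - pos Y) * pos X) := by noncomm_ring
  have e2 : -(Y - pos Y) * X - X * -(Y - pos Y)
      = (pos X * (Y - pos Y) + (X - pos X) * (Y - pos Y))
        - ((Y - pos Y) * pos X + (Y - pos Y) * (X - pos X)) := by noncomm_ring
  rw [e1, e2]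
  simp only [hadd, psub, hca, hac, hdb, hbd]
  noncomm_ring

end Final
end Stmt16

theorem stmt_16 {D : Type*} [Ring D]
    (pos neg : D → D)
    (hsplit : ∀ x, pos x + neg x = x)
    (hpos_add : ∀ x y, pos (x + y) = pos x + pos y)
    (hpos_idem : ∀ x, pos (pos x) = pos x)
    (hpos_mul : ∀ x y, pos (pos x * pos y) = pos x * pos y)
    (hneg_mul : ∀ x y, neg (neg x * neg y) = neg x * neg y)
    (hpos_one : pos 1 = 1)
    (del Φ Φh : Dˣ)
    (hdel_pos : pos (del : D) = (del : D))
    -- the hierarchy flows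
    (T Th : ℕ → D → D)
    (hT_add : ∀ k x y, T k (x + y) = T k x + T k y)
    (hT_mul : ∀ k x y, T k (x * y) = T k x * y + x * T k y)
    (hT_pos : ∀ k x, T k (pos x) = pos (T k x))
    (hT_del : ∀ k, T k (del : D) = 0)
    (hTh_add : ∀ k x y, Th k (x + y) = Th k x + Th k y)
    (hTh_mul : ∀ k x y, Th k (x * y) = Th k x * y + x * Th k y)
    (hTh_pos : ∀ k x, Th k (pos x) = pos (Th k x))
    (hTh_del : ∀ k, Th k (del : D) = 0)
    -- the operators Ξ and Ξ̂ entering the Orlov–Schulman operators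
    (Ξ Ξh : D)
    (hΞ_del : (del : D) * Ξ - Ξ * (del : D) = 1)
    (hΞh_del : (del : D) * Ξh - Ξh * (del : D) = 1)
    (hΞ_T : ∀ k : ℕ, 1 ≤ k →
      T k Ξ = (k : ℤ) • ((del ^ ((k : ℤ) - 1) : Dˣ) : D))
    (hΞ_Th : ∀ k : ℕ, 1 ≤ k → Th k Ξ = 0)
    (hΞh_T : ∀ k : ℕ, 1 ≤ k → T k Ξh = if k = 1 then 1 else 0)
    (hΞh_Th : ∀ k : ℕ, 1 ≤ k →
      Th k Ξh = (k : ℤ) • ((del ^ (-(k : ℤ) - 1) : Dˣ) : D))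
    -- the additional flows
    (S Sh : ℕ → ℤ → D → D)
    (hS_add : ∀ m p x y, S m p (x + y) = S m p x + S m p y)
    (hS_mul : ∀ m p x y, S m p (x * y) = S m p x * y + x * S m p y)
    (hS_pos : ∀ m p x, S m p (pos x) = pos (S m p x))
    (hS_del : ∀ m p, S m p (del : D) = 0)
    (hS_Ξ : ∀ m p, S m p Ξ = 0) (hS_Ξh : ∀ m p, S m p Ξh = 0)
    (hSh_add : ∀ m p x y, Sh m p (x + y) = Sh m p x + Sh m p y)
    (hSh_mul : ∀ m p x y, Sh m p (x * y) = Sh m p x * y + x * Sh m p y)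
    (hSh_pos : ∀ m p x, Sh m p (pos x) = pos (Sh m p x))
    (hSh_del : ∀ m p, Sh m p (del : D) = 0)
    (hSh_Ξ : ∀ m p, Sh m p Ξ = 0) (hSh_Ξh : ∀ m p, Sh m p Ξh = 0)
    -- the hierarchy flows do not move the additional times and vice versa,
    -- i.e. the mixed action is computed on the same dressing operators:
    :
    let P : Dˣ := Φ * del * Φ⁻¹
    let Ph : Dˣ := Φh * del⁻¹ * Φh⁻¹
    let M : D := (Φ : D) * Ξ * ((Φ⁻¹ : Dˣ) : D)
    let Mh : D := (Φh : D) * Ξh * ((Φh⁻¹ : Dˣ) : D)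
    let Bop : ℕ → ℤ → D := fun m p => M ^ m * ((P ^ p : Dˣ) : D)
    let Bhop : ℕ → ℤ → D := fun m p => Mh ^ m * ((Ph ^ (-p) : Dˣ) : D)
    -- the extended KP hierarchy:
    (∀ k : ℕ, 1 ≤ k →
      T k (Φ : D) = -(neg ((P ^ k : Dˣ) : D)) * (Φ : D)) →
    (∀ k : ℕ, 1 ≤ k →
      T k (Φh : D)
        = (pos ((P ^ k : Dˣ) : D) - (if k = 1 then ((Ph⁻¹ : Dˣ) : D) else 0))
            * (Φh : D)) →
    (∀ k : ℕ, 1 ≤ k →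
      Th k (Φ : D) = -(neg ((Ph ^ k : Dˣ) : D)) * (Φ : D)) →
    (∀ k : ℕ, 1 ≤ k →
      Th k (Φh : D) = pos ((Ph ^ k : Dˣ) : D) * (Φh : D)) →
    -- the additional flows:
    (∀ (m : ℕ) (p : ℤ), S m p (Φ : D) = -(neg (Bop m p)) * (Φ : D)) →
    (∀ (m : ℕ) (p : ℤ), S m p (Φh : D) = pos (Bop m p) * (Φh : D)) →
    (∀ (m : ℕ) (p : ℤ), Sh m p (Φ : D) = -(neg (Bhop m p)) * (Φ : D)) →
    (∀ (m : ℕ) (p : ℤ), Sh m p (Φh : D) = pos (Bhop m p) * (Φh : D)) →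
    -- conclusion: the additional symmetries commute with the hierarchy flows
    (∀ (m : ℕ) (p : ℤ) (k : ℕ), 1 ≤ k →
      S m p (T k (Φ : D)) = T k (S m p (Φ : D)) ∧
      S m p (Th k (Φ : D)) = Th k (S m p (Φ : D)) ∧
      Sh m p (T k (Φ : D)) = T k (Sh m p (Φ : D)) ∧
      Sh m p (Th k (Φ : D)) = Th k (Sh m p (Φ : D)) ∧
      S m p (T k (Φh : D)) = T k (S m p (Φh : D)) ∧
      S m p (Th k (Φh : D)) = Th k (S m p (Φh : D)) ∧
      Sh m p (T k (Φh : D)) = T k (Sh m p (Φh : D)) ∧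
      Sh m p (Th k (Φh : D)) = Th k (Sh m p (Φh : D))) := by
  intro P Ph M Mh Bop Bhop hTΦa hTΦha hThΦa hThΦha hSΦa hSΦha hShΦa hShΦha m p k hk
  obtain ⟨j, rfl⟩ : ∃ j, k = j + 1 := ⟨k - 1, (Nat.succ_pred_eq_of_pos hk).symm⟩
  have hTΦ := hTΦa (j+1) (by omega)
  have hTΦh := hTΦha (j+1) (by omega)
  have hThΦ := hThΦa (j+1) (by omega)
  have hThΦh := hThΦha (j+1) (by omega)
  have hSΦ := hSΦa m p
  have hSΦh := hSΦha m p
  have hShΦ := hShΦa m p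
  have hShΦh := hShΦha m p
  simp only [P, Ph, M, Mh, Bop, Bhop] at hTΦ hTΦh hThΦ hThΦh hSΦ hSΦh hShΦ hShΦh
  have hnegE : ∀ x : D, neg x = x - pos x := fun x => (eq_sub_of_add_eq' (hsplit x))
  simp only [hnegE, Units.val_pow_eq_pow_val] at hTΦ hTΦh hThΦ hThΦh hSΦ hSΦh hShΦ hShΦh
  set PU : Dˣ := Φ * del * Φ⁻¹ with hPU
  set PhU : Dˣ := Φh * del⁻¹ * Φh⁻¹ with hPhU
  set Md : D := ↑Φ * Ξ * ↑(Φ⁻¹ : Dˣ) with hMd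
  set Mhd : D := ↑Φh * Ξh * ↑(Φh⁻¹ : Dˣ) with hMhd
  set XS : D := Md ^ m * ↑(PU ^ p) with hXS
  set XSh : D := Mhd ^ m * ↑(PhU ^ (-p)) with hXSh
  set YP : D := (↑PU : D) ^ (j+1) with hYP
  set YPh : D := (↑PhU : D) ^ (j+1) with hYPh
  set Zd : D := (if j + 1 = 1 then (↑(PhU⁻¹ : Dˣ) : D) else 0) with hZd
  -- derivation structures
  have hT : Stmt16.IsDer (T (j+1)) := ⟨hT_add _, hT_mul _⟩
  have hTh : Stmt16.IsDer (Th (j+1)) := ⟨hTh_add _, hTh_mul _⟩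
  have hS : Stmt16.IsDer (S m p) := ⟨hS_add m p, hS_mul m p⟩
  have hSh : Stmt16.IsDer (Sh m p) := ⟨hSh_add m p, hSh_mul m p⟩
  -- pos calculus
  have p0 : pos 0 = 0 := by
    have h0 := hpos_add 0 0; rw [add_zero] at h0; exact right_eq_add.mp h0
  have pneg : ∀ x : D, pos (-x) = -pos x := by
    intro x; have h0 := hpos_add x (-x); rw [add_neg_cancel, p0] at h0
    exact eq_neg_of_add_eq_zero_right h0.symm
  have psub : ∀ x y : D, pos (x - y) = pos x - pos y := by
    intro x y; rw [sub_eq_add_neg, hpos_add, pneg, ← sub_eq_add_neg]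
  have hNN : ∀ x y : D, pos ((x - pos x) * (y - pos y)) = 0 := by
    intro x y; have h0 := hneg_mul x y
    simp only [hnegE] at h0
    exact sub_eq_self.mp h0
  -- unit value expansions
  have hPUval : (↑PU : D) = ↑Φ * ↑del * ↑(Φ⁻¹:Dˣ) := by rw [hPU]; simp [Units.val_mul]
  have hPhUval : (↑PhU : D) = ↑Φh * ↑(del⁻¹:Dˣ) * ↑(Φh⁻¹:Dˣ) := by
    rw [hPhU]; simp [Units.val_mul]
  -- derivative of ↑del⁻¹ vanishes for all flows
  have hSdelinv : S m p (↑(del⁻¹:Dˣ):D) = 0 := by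
    rw [hS.unit_inv del, hS_del m p]; simp
  have hShdelinv : Sh m p (↑(del⁻¹:Dˣ):D) = 0 := by
    rw [hSh.unit_inv del, hSh_del m p]; simp
  have hTdelinv : T (j+1) (↑(del⁻¹:Dˣ):D) = 0 := by
    rw [hT.unit_inv del, hT_del (j+1)]; simp
  have hThdelinv : Th (j+1) (↑(del⁻¹:Dˣ):D) = 0 := by
    rw [hTh.unit_inv del, hTh_del (j+1)]; simp
  -- brackets
  have hPM : (↑PU:D) * Md - Md * ↑PU = 1 := by
    rw [hPUval, hMd, Stmt16.conj_mul, Stmt16.conj_mul, Stmt16.conj_sub, hΞ_del,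
      Stmt16.conj_one]
  have hZMh1 : (↑(PhU⁻¹:Dˣ):D) * Mhd - Mhd * ↑(PhU⁻¹:Dˣ) = 1 := by
    have hPhUinv : (↑(PhU⁻¹:Dˣ):D) = ↑Φh * ↑del * ↑(Φh⁻¹:Dˣ) := by
      rw [hPhU, show (Φh * del⁻¹ * Φh⁻¹)⁻¹ = Φh * del * Φh⁻¹ from by group]
      simp [Units.val_mul]
    rw [hPhUinv, hMhd, Stmt16.conj_mul, Stmt16.conj_mul, Stmt16.conj_sub, hΞh_del,
      Stmt16.conj_one]
  have hdinvXi : (↑(del⁻¹:Dˣ):D) * Ξh - Ξh * ↑(del⁻¹:Dˣ)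
      = -((↑(del⁻¹:Dˣ):D) * ↑(del⁻¹:Dˣ)) := by
    have h1 : (↑(del⁻¹:Dˣ):D) * ((↑del * Ξh - Ξh * ↑del) * ↑(del⁻¹:Dˣ))
        = ↑(del⁻¹:Dˣ) * (1 * ↑(del⁻¹:Dˣ)) := by rw [hΞh_del]
    have h2 : (↑(del⁻¹:Dˣ):D) * ((↑del * Ξh - Ξh * ↑del) * ↑(del⁻¹:Dˣ))
        = (↑(del⁻¹:Dˣ) * ↑del) * (Ξh * ↑(del⁻¹:Dˣ))
          - (↑(del⁻¹:Dˣ) * Ξh) * (↑del * ↑(del⁻¹:Dˣ)) := by noncomm_ring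
    rw [h2, del.inv_mul, del.mul_inv, one_mul, mul_one, one_mul] at h1
    rw [← h1]; noncomm_ring
  have hPhMh : (↑PhU:D) * Mhd - Mhd * ↑PhU = -((↑PhU:D) * ↑PhU) := by
    rw [hPhUval, hMhd, Stmt16.conj_mul, Stmt16.conj_mul, Stmt16.conj_sub, hdinvXi,
      Stmt16.conj_mul]
    noncomm_ring
  -- S-flow on the operators
  have hSPd : S m p (↑PU:D) = -(XS - pos XS) * ↑PU - ↑PU * -(XS - pos XS) := by
    rw [hPUval]; exact hS.conj_comm0 Φ _ ↑del hSΦ (hS_del m p)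
  have hSYP : S m p YP = -(XS - pos XS) * YP - YP * -(XS - pos XS) := by
    rw [hYP]; exact hS.comm_pow _ _ hSPd (j+1)
  have hSPhd : S m p (↑PhU:D) = pos XS * ↑PhU - ↑PhU * pos XS := by
    rw [hPhUval]; exact hS.conj_comm0 Φh _ _ hSΦh hSdelinv
  have hSYPh : S m p YPh = pos XS * YPh - YPh * pos XS := by
    rw [hYPh]; exact hS.comm_pow _ _ hSPhd (j+1)
  have hSZ : S m p Zd = pos XS * Zd - Zd * pos XS := by
    rw [hZd]; split_ifs
    · exact hS.comm_unit_inv _ PhU hSPhd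
    · rw [hS.zero]; simp
  have hShPd : Sh m p (↑PU:D) = -(XSh - pos XSh) * ↑PU - ↑PU * -(XSh - pos XSh) := by
    rw [hPUval]; exact hSh.conj_comm0 Φ _ ↑del hShΦ (hSh_del m p)
  have hShYP : Sh m p YP = -(XSh - pos XSh) * YP - YP * -(XSh - pos XSh) := by
    rw [hYP]; exact hSh.comm_pow _ _ hShPd (j+1)
  have hShPhd : Sh m p (↑PhU:D) = pos XSh * ↑PhU - ↑PhU * pos XSh := by
    rw [hPhUval]; exact hSh.conj_comm0 Φh _ _ hShΦh hShdelinv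
  have hShYPh : Sh m p YPh = pos XSh * YPh - YPh * pos XSh := by
    rw [hYPh]; exact hSh.comm_pow _ _ hShPhd (j+1)
  have hShZ : Sh m p Zd = pos XSh * Zd - Zd * pos XSh := by
    rw [hZd]; split_ifs
    · exact hSh.comm_unit_inv _ PhU hShPhd
    · rw [hSh.zero]; simp
  -- T-flow on the operators
  have hTXi : T (j+1) Ξ = ((j+1:ℕ):D) * ((↑del:D)^j) := by
    rw [hΞ_T (j+1) (by omega), show ((j+1:ℕ):ℤ) - 1 = ((j:ℕ):ℤ) from by push_cast; ring,
        zpow_natCast, Units.val_pow_eq_pow_val, zsmul_eq_mul]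
    norm_cast
  have hTPd : T (j+1) (↑PU:D) = pos YP * ↑PU - ↑PU * pos YP := by
    have h0 : T (j+1) (↑PU:D) = -(YP - pos YP) * ↑PU - ↑PU * -(YP - pos YP) := by
      rw [hPUval]; exact hT.conj_comm0 Φ _ ↑del hTΦ (hT_del (j+1))
    refine Stmt16.comm_shift _ _ _ YP h0 (by noncomm_ring) ?_
    rw [hYP, ← pow_succ, ← pow_succ']
  have hTMd : T (j+1) Md = pos YP * Md - Md * pos YP := by
    have h0 : T (j+1) Md = -(YP - pos YP) * Md - Md * -(YP - pos YP)
        + ↑Φ * T (j+1) Ξ * ↑(Φ⁻¹:Dˣ) := by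
      rw [hMd]; exact hT.conj Φ _ Ξ hTΦ
    rw [h0, hTXi, Stmt16.conj_nat_cast]
    have e2 : (↑Φ:D) * (↑del:D)^j * ↑(Φ⁻¹:Dˣ) = (↑PU:D)^j := by
      rw [hPUval, Stmt16.conj_pow]
    rw [e2]
    have hbr := Stmt16.bracket_pow_one PU Md hPM j
    have hA : Md * (↑PU:D)^(j+1)
        = -((((j:ℕ):D)+1) * (↑PU:D)^j) + (↑PU:D)^(j+1) * Md := sub_eq_iff_eq_add.mp hbr
    rw [hYP, neg_sub, sub_mul, mul_sub, hA]
    push_cast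
    noncomm_ring
  have hTXS : T (j+1) XS = pos YP * XS - XS * pos YP := by
    rw [hXS]; exact hT.comm_prod _ _ _ hTMd hTPd m p
  have hZPh : Zd * (↑PhU:D) = ↑PhU * Zd := by
    rw [hZd]; split_ifs
    · rw [PhU.inv_mul, PhU.mul_inv]
    · simp
  have hTPhd : T (j+1) (↑PhU:D) = pos YP * ↑PhU - ↑PhU * pos YP := by
    have h0 : T (j+1) (↑PhU:D) = (pos YP - Zd) * ↑PhU - ↑PhU * (pos YP - Zd) := by
      rw [hPhUval]; exact hT.conj_comm0 Φh _ _ hTΦh hTdelinv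
    exact Stmt16.comm_shift _ _ _ Zd h0 rfl hZPh
  have hTMhd : T (j+1) Mhd = pos YP * Mhd - Mhd * pos YP := by
    have h0 : T (j+1) Mhd = (pos YP - Zd) * Mhd - Mhd * (pos YP - Zd)
        + ↑Φh * T (j+1) Ξh * ↑(Φh⁻¹:Dˣ) := by
      rw [hMhd]; exact hT.conj Φh _ Ξh hTΦh
    rw [h0, hΞh_T (j+1) (by omega), hZd]
    split_ifs with hc
    · rw [Stmt16.conj_one, sub_mul, mul_sub, ← hZMh1]
      noncomm_ring
    · simp
  have hTXSh : T (j+1) XSh = pos YP * XSh - XSh * pos YP := by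
    rw [hXSh]; exact hT.comm_prod _ _ _ hTMhd hTPhd m (-p)
  -- Th-flow on the operators
  have hThPd : Th (j+1) (↑PU:D) = -(YPh - pos YPh) * ↑PU - ↑PU * -(YPh - pos YPh) := by
    rw [hPUval]; exact hTh.conj_comm0 Φ _ ↑del hThΦ (hTh_del (j+1))
  have hThMd : Th (j+1) Md = -(YPh - pos YPh) * Md - Md * -(YPh - pos YPh) := by
    rw [hMd]; exact hTh.conj_comm0 Φ _ Ξ hThΦ (hΞ_Th (j+1) (by omega))
  have hThXS : Th (j+1) XS = -(YPh - pos YPh) * XS - XS * -(YPh - pos YPh) := by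
    rw [hXS]; exact hTh.comm_prod _ _ _ hThMd hThPd m p
  have hThXih : Th (j+1) Ξh = ((j+1:ℕ):D) * ((↑(del⁻¹:Dˣ):D)^(j+2)) := by
    rw [hΞh_Th (j+1) (by omega),
        show -((j+1:ℕ):ℤ) - 1 = -((j+2:ℕ):ℤ) from by push_cast; ring,
        zpow_neg, zpow_natCast, ← inv_pow, Units.val_pow_eq_pow_val, zsmul_eq_mul]
    norm_cast
  have hThPhd : Th (j+1) (↑PhU:D) = -(YPh - pos YPh) * ↑PhU - ↑PhU * -(YPh - pos YPh) := by
    have h0 : Th (j+1) (↑PhU:D) = pos YPh * ↑PhU - ↑PhU * pos YPh := by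
      rw [hPhUval]; exact hTh.conj_comm0 Φh _ _ hThΦh hThdelinv
    refine Stmt16.comm_shift _ _ _ (-YPh) h0 (by noncomm_ring) ?_
    rw [hYPh, neg_mul, mul_neg, ← pow_succ, ← pow_succ']
  have hThMhd : Th (j+1) Mhd = -(YPh - pos YPh) * Mhd - Mhd * -(YPh - pos YPh) := by
    have h0 : Th (j+1) Mhd = pos YPh * Mhd - Mhd * pos YPh
        + ↑Φh * Th (j+1) Ξh * ↑(Φh⁻¹:Dˣ) := by
      rw [hMhd]; exact hTh.conj Φh _ Ξh hThΦh
    rw [h0, hThXih, Stmt16.conj_nat_cast]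
    have e2 : (↑Φh:D) * (↑(del⁻¹:Dˣ):D)^(j+2) * ↑(Φh⁻¹:Dˣ) = (↑PhU:D)^(j+2) := by
      rw [hPhUval, Stmt16.conj_pow]
    rw [e2]
    have hbr := Stmt16.bracket_pow_sq PhU Mhd hPhMh j
    have hA : Mhd * (↑PhU:D)^(j+1)
        = (((j:ℕ):D)+1) * (↑PhU:D)^(j+2) + (↑PhU:D)^(j+1) * Mhd := sub_eq_iff_eq_add.mp hbr
    rw [hYPh, neg_sub, sub_mul, mul_sub, hA]
    push_cast
    noncomm_ring
  have hThXSh : Th (j+1) XSh = -(YPh - pos YPh) * XSh - XSh * -(YPh - pos YPh) := by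
    rw [hXSh]; exact hTh.comm_prod _ _ _ hThMhd hThPhd m (-p)
  -- assemble the eight commutation statements
  refine ⟨?_, ?_, ?_, ?_, ?_, ?_, ?_, ?_⟩
  · exact Stmt16.final_phi_T pos hpos_add psub hS hT (hS_pos m p) (hT_pos (j+1)) ↑Φ XS YP
      (hpos_mul YP XS) (hpos_mul XS YP) (hNN YP XS) (hNN XS YP) hSΦ hTΦ hSYP hTXS
  · exact Stmt16.final_phi_Th pos hpos_add psub hS hTh (hS_pos m p) (hTh_pos (j+1)) ↑Φ XS YPh
      (hpos_mul YPh XS) (hpos_mul XS YPh) (hNN YPh XS) (hNN XS YPh) hSΦ hThΦ hSYPh hThXS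
  · exact Stmt16.final_phi_T pos hpos_add psub hSh hT (hSh_pos m p) (hT_pos (j+1)) ↑Φ XSh YP
      (hpos_mul YP XSh) (hpos_mul XSh YP) (hNN YP XSh) (hNN XSh YP) hShΦ hTΦ hShYP hTXSh
  · exact Stmt16.final_phi_Th pos hpos_add psub hSh hTh (hSh_pos m p) (hTh_pos (j+1)) ↑Φ XSh YPh
      (hpos_mul YPh XSh) (hpos_mul XSh YPh) (hNN YPh XSh) (hNN XSh YPh) hShΦ hThΦ hShYPh hThXSh
  · exact Stmt16.final_phih_T pos hpos_add psub hS hT (hS_pos m p) (hT_pos (j+1)) ↑Φh XS YP Zd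
      (hpos_mul YP XS) (hpos_mul XS YP) (hNN YP XS) (hNN XS YP) hSΦh hTΦh hSYP hSZ hTXS
  · exact Stmt16.final_phih_Th pos hpos_add psub hS hTh (hS_pos m p) (hTh_pos (j+1)) ↑Φh XS YPh
      (hpos_mul YPh XS) (hpos_mul XS YPh) (hNN YPh XS) (hNN XS YPh) hSΦh hThΦh hSYPh hThXS
  · exact Stmt16.final_phih_T pos hpos_add psub hSh hT (hSh_pos m p) (hT_pos (j+1)) ↑Φh XSh YP Zd
      (hpos_mul YP XSh) (hpos_mul XSh YP) (hNN YP XSh) (hNN XSh YP) hShΦh hTΦh hShYP hShZ hTXSh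
  · exact Stmt16.final_phih_Th pos hpos_add psub hSh hTh (hSh_pos m p) (hTh_pos (j+1)) ↑Φh XSh YPh
      (hpos_mul YPh XSh) (hpos_mul XSh YPh) (hNN YPh XSh) (hNN XSh YPh) hShΦh hThΦh hShYPh hThXSh
end

section
/- Let c_{mp,m′p′}^{nq} be the structure constants determined by [B_{mp}, B_{m′p′}] = Σ_{n,q} c_{mp,m′p′}^{nq} B_{nq} (these same constants satisfy [B̂_{mp}, B̂_{m′p′}] = Σ_{n,q} c_{mp,m′p′}^{nq} B̂_{nq}). Then for Φ̃ = Φ or Φ̂: [∂/∂β_{mp}, ∂/∂β_{m′p′}] Φ̃ = −Σ_{n,q} c_{mp,m′p′}^{nq} ∂Φ̃/∂β_{nq}; [∂/∂β̂_{mp}, ∂/∂β̂_{m′p′}] Φ̃ = Σ_{n,q} c_{mp,m′p′}^{nq} ∂Φ̃/∂β̂_{nq}; and [∂/∂β_{mp}, ∂/∂β̂_{m′p′}] Φ̃ = 0. In other words, the additional symmetries generate a W_{1+∞} × W_{1+∞} algebra. -/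
/-!
STATEMENT 17: Let c_{mp,m′p′}^{nq} be the structure constants with
[B_{mp}, B_{m′p′}] = Σ c_{mp,m′p′}^{nq} B_{nq} (the same constants satisfying
[B̂_{mp}, B̂_{m′p′}] = Σ c_{mp,m′p′}^{nq} B̂_{nq}).  Then for Φ̃ = Φ or Φ̂:
[∂/∂β_{mp}, ∂/∂β_{m′p′}]Φ̃ = −Σ c ∂Φ̃/∂β_{nq},
[∂/∂β̂_{mp}, ∂/∂β̂_{m′p′}]Φ̃ = Σ c ∂Φ̃/∂β̂_{nq},
[∂/∂β_{mp}, ∂/∂β̂_{m′p′}]Φ̃ = 0;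
i.e. the additional symmetries generate a W_{1+∞} × W_{1+∞} algebra.
-/


set_option linter.unusedSectionVars false
set_option maxHeartbeats 1000000

namespace W17

variable {D : Type*} [Ring D]

section deriv
variable (T : D → D) (hadd : ∀ x y, T (x + y) = T x + T y)
  (hmul : ∀ x y, T (x * y) = T x * y + x * T y)

include hadd

lemma T0 : T 0 = 0 := by
  have := hadd 0 0; simpa using this.symm

lemma Tneg (x : D) : T (-x) = -T x := by
  have h := hadd x (-x)
  rw [add_neg_cancel, T0 T hadd] at h
  exact eq_neg_of_add_eq_zero_right h.symm

lemma Tsub (x y : D) : T (x - y) = T x - T y := by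
  rw [sub_eq_add_neg, hadd, Tneg T hadd, sub_eq_add_neg]

include hmul

lemma T1 : T 1 = 0 := by
  have h := hmul 1 1
  rw [mul_one, mul_one, one_mul] at h
  exact left_eq_add.mp h

lemma Tinv (u : Dˣ) : T ((u⁻¹ : Dˣ) : D) = -(((u⁻¹ : Dˣ) : D) * T (u : D) * ((u⁻¹ : Dˣ) : D)) := by
  have h : T ((u : D) * ((u⁻¹ : Dˣ) : D)) = 0 := by
    rw [Units.mul_inv]; exact T1 T hadd hmul
  rw [hmul] at h
  have h2 := congrArg (fun z => ((u⁻¹ : Dˣ) : D) * z) h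
  simp only [mul_add, ← mul_assoc, Units.inv_mul, one_mul, mul_zero] at h2
  exact eq_neg_of_add_eq_zero_right h2

variable (G : D)

lemma comm_mul {a b : D} (ha : T a = G * a - a * G) (hb : T b = G * b - b * G) :
    T (a * b) = G * (a * b) - (a * b) * G := by
  rw [hmul, ha, hb]; noncomm_ring

lemma comm_pow {a : D} (ha : T a = G * a - a * G) (n : ℕ) :
    T (a ^ n) = G * a ^ n - a ^ n * G := by
  induction n with
  | zero => simp [T1 T hadd hmul]
  | succ k ih =>
    rw [pow_succ]
    exact comm_mul T hadd hmul G ih ha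

lemma comm_inv {u : Dˣ} (hu : T (u : D) = G * u - u * G) :
    T ((u⁻¹ : Dˣ) : D) = G * ((u⁻¹ : Dˣ) : D) - ((u⁻¹ : Dˣ) : D) * G := by
  rw [Tinv T hadd hmul, hu]
  have h1 : ((u⁻¹ : Dˣ) : D) * (u : D) = 1 := Units.inv_mul u
  have h2 : (u : D) * ((u⁻¹ : Dˣ) : D) = 1 := Units.mul_inv u
  calc -(((u⁻¹ : Dˣ) : D) * (G * (u : D) - (u : D) * G) * ((u⁻¹ : Dˣ) : D))
      = -(((u⁻¹ : Dˣ) : D) * G * ((u : D) * ((u⁻¹ : Dˣ) : D))) + (((u⁻¹ : Dˣ) : D) * (u : D)) * G * ((u⁻¹ : Dˣ) : D) := by noncomm_ring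
    _ = G * ((u⁻¹ : Dˣ) : D) - ((u⁻¹ : Dˣ) : D) * G := by rw [h1, h2]; noncomm_ring

lemma comm_zpow {u : Dˣ} (hu : T (u : D) = G * u - u * G) (p : ℤ) :
    T ((u ^ p : Dˣ) : D) = G * ((u ^ p : Dˣ) : D) - ((u ^ p : Dˣ) : D) * G := by
  obtain ⟨n, rfl | rfl⟩ := Int.eq_nat_or_neg p
  · rw [zpow_natCast, Units.val_pow_eq_pow_val]
    exact comm_pow T hadd hmul G hu n
  · rw [zpow_neg, zpow_natCast]
    exact comm_inv T hadd hmul G (by rw [Units.val_pow_eq_pow_val]; exact comm_pow T hadd hmul G hu n)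

lemma conj {Φu : Dˣ} {c : D} (hc : T c = 0) (hΦ : T (Φu : D) = G * (Φu : D)) :
    T ((Φu : D) * c * ((Φu⁻¹ : Dˣ) : D)) =
      G * ((Φu : D) * c * ((Φu⁻¹ : Dˣ) : D)) - ((Φu : D) * c * ((Φu⁻¹ : Dˣ) : D)) * G := by
  rw [hmul, hmul, hc, hΦ, Tinv T hadd hmul, hΦ]
  have e1 : -(((Φu⁻¹ : Dˣ) : D) * (G * (Φu : D)) * ((Φu⁻¹ : Dˣ) : D)) = -(((Φu⁻¹ : Dˣ) : D) * G) := by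
    have h2 : ((Φu : D) * ((Φu⁻¹ : Dˣ) : D)) = 1 := Units.mul_inv _
    calc -(((Φu⁻¹ : Dˣ) : D) * (G * (Φu : D)) * ((Φu⁻¹ : Dˣ) : D))
        = -(((Φu⁻¹ : Dˣ) : D) * G * ((Φu : D) * ((Φu⁻¹ : Dˣ) : D))) := by noncomm_ring
      _ = -(((Φu⁻¹ : Dˣ) : D) * G) := by rw [h2, mul_one]
  rw [e1]
  noncomm_ring

/-- the master commuting lemma for `B`-type operators -/
lemma keyB {Φu d : Dˣ} {Ξc : D} (hTd : T (d : D) = 0) (hTΞ : T Ξc = 0)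
    {G : D} (hΦ : T (Φu : D) = G * (Φu : D)) (m : ℕ) (p : ℤ) :
    T (((Φu : D) * Ξc * ((Φu⁻¹ : Dˣ) : D)) ^ m * (((Φu * d * Φu⁻¹) ^ p : Dˣ) : D)) =
      G * (((Φu : D) * Ξc * ((Φu⁻¹ : Dˣ) : D)) ^ m * (((Φu * d * Φu⁻¹) ^ p : Dˣ) : D))
      - (((Φu : D) * Ξc * ((Φu⁻¹ : Dˣ) : D)) ^ m * (((Φu * d * Φu⁻¹) ^ p : Dˣ) : D)) * G := by
  apply comm_mul T hadd hmul G
  · exact comm_pow T hadd hmul G (conj T hadd hmul G hTΞ hΦ) m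
  · apply comm_zpow T hadd hmul G _ p
    have : ((Φu * d * Φu⁻¹ : Dˣ) : D) = (Φu : D) * (d : D) * ((Φu⁻¹ : Dˣ) : D) := by
      simp [Units.val_mul]
    rw [this]
    exact conj T hadd hmul G hTd hΦ

end deriv


section posneg
variable (π ν : D → D)
  (hsplit : ∀ x, π x + ν x = x)
  (hπadd : ∀ x y, π (x + y) = π x + π y)
  (hππ : ∀ x y, π (π x * π y) = π x * π y)
  (hνν : ∀ x y, ν (ν x * ν y) = ν x * ν y)

include hsplit

lemma nu_def (x : D) : ν x = x - π x :=
  (eq_sub_of_add_eq' (hsplit x))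

lemma pi_def (x : D) : π x = x - ν x :=
  (eq_sub_of_add_eq (hsplit x))

include hπadd

lemma nu_add (x y : D) : ν (x + y) = ν x + ν y := by
  rw [nu_def π ν hsplit, nu_def π ν hsplit, nu_def π ν hsplit, hπadd]; abel

lemma pi_zero : π 0 = 0 := by
  have := hπadd 0 0; simpa using this.symm

lemma nu_zero : ν 0 = 0 := by
  rw [nu_def π ν hsplit, pi_zero π ν hsplit hπadd]; abel

lemma pi_neg (x : D) : π (-x) = -π x := by
  have h := hπadd x (-x)
  rw [add_neg_cancel, pi_zero π ν hsplit hπadd] at h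
  exact eq_neg_of_add_eq_zero_right h.symm

lemma nu_neg (x : D) : ν (-x) = -ν x := by
  rw [nu_def π ν hsplit, nu_def π ν hsplit, pi_neg π ν hsplit hπadd]; abel

lemma pi_sub (x y : D) : π (x - y) = π x - π y := by
  rw [sub_eq_add_neg, hπadd, pi_neg π ν hsplit hπadd, sub_eq_add_neg]

lemma nu_sub (x y : D) : ν (x - y) = ν x - ν y := by
  rw [sub_eq_add_neg, nu_add π ν hsplit hπadd, nu_neg π ν hsplit hπadd, sub_eq_add_neg]

include hππ in
lemma nu_pipi (x y : D) : ν (π x * π y) = 0 := by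
  rw [nu_def π ν hsplit, hππ]; abel

omit hπadd in
include hνν in
lemma pi_nunu (x y : D) : π (ν x * ν y) = 0 := by
  have h := hsplit (ν x * ν y)
  rw [hνν] at h
  exact add_eq_right.mp h

include hππ in
lemma nu_congr {a b c d E F : D} (h : F = E + (π a * π b - π c * π d)) : ν F = ν E := by
  rw [h, nu_add π ν hsplit hπadd, nu_sub π ν hsplit hπadd,
    nu_pipi π ν hsplit hπadd hππ, nu_pipi π ν hsplit hπadd hππ]; abel

include hνν in
omit hππ in
lemma pi_congr {a b c d E F : D} (h : F = E + (ν a * ν b - ν c * ν d)) : π F = π E := by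
  rw [h, hπadd, pi_sub π ν hsplit hπadd,
    pi_nunu π ν hsplit hνν, pi_nunu π ν hsplit hνν]; abel

include hνν hππ

lemma R1 (x y : D) :
    -ν ((-ν x) * y - y * (-ν x)) + ν y * ν x + ν ((-ν y) * x - x * (-ν y)) - ν x * ν y
      = ν (x * y - y * x) := by
  have expand : ν (ν x * y - y * ν x + ν y * ν x - (ν y * x - x * ν y) - ν x * ν y)
      = -ν ((-ν x) * y - y * (-ν x)) + ν y * ν x + ν ((-ν y) * x - x * (-ν y)) - ν x * ν y := by
    have e : (ν x * y - y * ν x + ν y * ν x - (ν y * x - x * ν y) - ν x * ν y)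
        = (-((-ν x) * y - y * (-ν x))) + ν y * ν x - (-((-ν y) * x - x * (-ν y))) - ν x * ν y := by
      noncomm_ring
    rw [e, ← hνν y x, ← hνν x y, nu_sub π ν hsplit hπadd, nu_sub π ν hsplit hπadd,
      nu_add π ν hsplit hπadd, nu_neg π ν hsplit hπadd, nu_neg π ν hsplit hπadd,
      hνν, hνν]
    simp only [hνν]
    abel
  rw [← expand]
  refine (nu_congr π ν hsplit hπadd hππ (a := x) (b := y) (c := y) (d := x) ?_).symm
  rw [pi_def π ν hsplit x, pi_def π ν hsplit y]
  noncomm_ring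

lemma R2 (x y : D) :
    π ((-ν x) * y - y * (-ν x)) + π y * π x - π ((-ν y) * x - x * (-ν y)) - π x * π y
      = -π (x * y - y * x) := by
  have expand : π (-(ν x * y - y * ν x) + π y * π x - (-(ν y * x - x * ν y)) - π x * π y)
      = π ((-ν x) * y - y * (-ν x)) + π y * π x - π ((-ν y) * x - x * (-ν y)) - π x * π y := by
    have e1 : (-ν x) * y - y * (-ν x) = -(ν x * y - y * ν x) := by noncomm_ring
    have e2 : (-ν y) * x - x * (-ν y) = -(ν y * x - x * ν y) := by noncomm_ring
    rw [e1, e2, ← hππ y x, ← hππ x y, pi_sub π ν hsplit hπadd, pi_sub π ν hsplit hπadd,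
      hπadd, hππ, hππ]
    simp only [hππ]
  rw [← expand, ← pi_neg π ν hsplit hπadd (x * y - y * x)]
  refine (pi_congr π ν hsplit hπadd hνν (a := x) (b := y) (c := y) (d := x) ?_).symm
  rw [pi_def π ν hsplit x, pi_def π ν hsplit y]
  noncomm_ring

lemma R3 (x y : D) :
    -ν (π x * y - y * π x) + ν y * ν x + ν (π y * x - x * π y) - ν x * ν y
      = -ν (x * y - y * x) := by
  have expand : ν (-(π x * y - y * π x) + ν y * ν x - (-(π y * x - x * π y)) - ν x * ν y)
      = -ν (π x * y - y * π x) + ν y * ν x + ν (π y * x - x * π y) - ν x * ν y := by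
    rw [← hνν y x, ← hνν x y, nu_sub π ν hsplit hπadd, nu_sub π ν hsplit hπadd,
      nu_add π ν hsplit hπadd, nu_neg π ν hsplit hπadd, nu_neg π ν hsplit hπadd, hνν, hνν]
    simp only [hνν]
    abel
  rw [← expand, ← nu_neg π ν hsplit hπadd (x * y - y * x)]
  refine (nu_congr π ν hsplit hπadd hππ (a := x) (b := y) (c := y) (d := x) ?_).symm
  rw [pi_def π ν hsplit x, pi_def π ν hsplit y]
  noncomm_ring

lemma R4 (x y : D) :
    π (π x * y - y * π x) + π y * π x - π (π y * x - x * π y) - π x * π y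
      = π (x * y - y * x) := by
  have expand : π ((π x * y - y * π x) + π y * π x - (π y * x - x * π y) - π x * π y)
      = π (π x * y - y * π x) + π y * π x - π (π y * x - x * π y) - π x * π y := by
    rw [← hππ y x, ← hππ x y, pi_sub π ν hsplit hπadd, pi_sub π ν hsplit hπadd,
      hπadd, hππ, hππ]
    simp only [hππ]
  rw [← expand]
  refine (pi_congr π ν hsplit hπadd hνν (a := x) (b := y) (c := y) (d := x) ?_).symm
  rw [pi_def π ν hsplit x, pi_def π ν hsplit y]
  noncomm_ring

lemma R5 (x y : D) :
    -ν (π x * y - y * π x) + ν y * ν x + ν ((-ν y) * x - x * (-ν y)) - ν x * ν y = 0 := by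
  have expand : ν (-(π x * y - y * π x) + ν y * ν x - (-((-ν y) * x - x * (-ν y))) - ν x * ν y)
      = -ν (π x * y - y * π x) + ν y * ν x + ν ((-ν y) * x - x * (-ν y)) - ν x * ν y := by
    rw [← hνν y x, ← hνν x y, nu_sub π ν hsplit hπadd, nu_sub π ν hsplit hπadd,
      nu_add π ν hsplit hπadd, nu_neg π ν hsplit hπadd, nu_neg π ν hsplit hπadd, hνν, hνν]
    simp only [hνν]
    abel
  rw [← expand, ← nu_zero π ν hsplit hπadd]
  refine (nu_congr π ν hsplit hπadd hππ (a := x) (b := y) (c := y) (d := x) ?_).symm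
  rw [pi_def π ν hsplit x, pi_def π ν hsplit y]
  noncomm_ring

lemma R6 (x y : D) :
    π (π x * y - y * π x) + π y * π x - π ((-ν y) * x - x * (-ν y)) - π x * π y = 0 := by
  have expand : π ((π x * y - y * π x) + π y * π x - ((-ν y) * x - x * (-ν y)) - π x * π y)
      = π (π x * y - y * π x) + π y * π x - π ((-ν y) * x - x * (-ν y)) - π x * π y := by
    rw [← hππ y x, ← hππ x y, pi_sub π ν hsplit hπadd, pi_sub π ν hsplit hπadd,
      hπadd, hππ, hππ]
    simp only [hππ]
  rw [← expand, ← pi_zero π ν hsplit hπadd]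
  refine (pi_congr π ν hsplit hπadd hνν (a := x) (b := y) (c := y) (d := x) ?_).symm
  rw [pi_def π ν hsplit x, pi_def π ν hsplit y]
  noncomm_ring

end posneg

section sums
variable {D : Type*} [Ring D]

lemma hom_sum (ν : D → D) (hadd : ∀ a b, ν (a + b) = ν a + ν b)
    (c : ℕ × ℤ →₀ ℤ) (g : ℕ × ℤ → D) :
    ν (c.sum fun nq k => k • g nq) = c.sum fun nq k => k • ν (g nq) := by
  let F : D →+ D := AddMonoidHom.mk' ν hadd
  show F (c.sum fun nq k => k • g nq) = _
  rw [map_finsuppSum]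
  exact Finsupp.sum_congr fun a _ => map_zsmul F _ _

lemma sum_mul_helper (c : ℕ × ℤ →₀ ℤ) (g : ℕ × ℤ → D) (Φ0 : D) :
    (c.sum fun nq k => k • (g nq * Φ0)) = (c.sum fun nq k => k • g nq) * Φ0 := by
  simp only [Finsupp.sum, Finset.sum_mul, smul_mul_assoc]

lemma sum_neg_mul_helper (c : ℕ × ℤ →₀ ℤ) (g : ℕ × ℤ → D) (Φ0 : D) :
    -(c.sum fun nq k => k • (-(g nq) * Φ0)) = (c.sum fun nq k => k • g nq) * Φ0 := by
  simp only [Finsupp.sum, neg_mul, smul_neg, Finset.sum_neg_distrib, neg_neg,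
    Finset.sum_mul, smul_mul_assoc]

end sums

end W17

theorem stmt_17 {D : Type*} [Ring D]
    (pos neg : D → D)
    (hsplit : ∀ x, pos x + neg x = x)
    (hpos_add : ∀ x y, pos (x + y) = pos x + pos y)
    (hpos_idem : ∀ x, pos (pos x) = pos x)
    (hpos_mul : ∀ x y, pos (pos x * pos y) = pos x * pos y)
    (hneg_mul : ∀ x y, neg (neg x * neg y) = neg x * neg y)
    (hpos_one : pos 1 = 1)
    (del Φ Φh : Dˣ)
    (hdel_pos : pos (del : D) = (del : D))
    (Ξ Ξh : D)
    (hΞ_del : (del : D) * Ξ - Ξ * (del : D) = 1)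
    (hΞh_del : (del : D) * Ξh - Ξh * (del : D) = 1)
    (S Sh : ℕ → ℤ → D → D)
    (hS_add : ∀ m p x y, S m p (x + y) = S m p x + S m p y)
    (hS_mul : ∀ m p x y, S m p (x * y) = S m p x * y + x * S m p y)
    (hS_pos : ∀ m p x, S m p (pos x) = pos (S m p x))
    (hS_del : ∀ m p, S m p (del : D) = 0)
    (hS_Ξ : ∀ m p, S m p Ξ = 0) (hS_Ξh : ∀ m p, S m p Ξh = 0)
    (hSh_add : ∀ m p x y, Sh m p (x + y) = Sh m p x + Sh m p y)
    (hSh_mul : ∀ m p x y, Sh m p (x * y) = Sh m p x * y + x * Sh m p y)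
    (hSh_pos : ∀ m p x, Sh m p (pos x) = pos (Sh m p x))
    (hSh_del : ∀ m p, Sh m p (del : D) = 0)
    (hSh_Ξ : ∀ m p, Sh m p Ξ = 0) (hSh_Ξh : ∀ m p, Sh m p Ξh = 0) :
    let P : Dˣ := Φ * del * Φ⁻¹
    let Ph : Dˣ := Φh * del⁻¹ * Φh⁻¹
    let M : D := (Φ : D) * Ξ * ((Φ⁻¹ : Dˣ) : D)
    let Mh : D := (Φh : D) * Ξh * ((Φh⁻¹ : Dˣ) : D)
    let Bop : ℕ → ℤ → D := fun m p => M ^ m * ((P ^ p : Dˣ) : D)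
    let Bhop : ℕ → ℤ → D := fun m p => Mh ^ m * ((Ph ^ (-p) : Dˣ) : D)
    -- the additional flows:
    (∀ (m : ℕ) (p : ℤ), S m p (Φ : D) = -(neg (Bop m p)) * (Φ : D)) →
    (∀ (m : ℕ) (p : ℤ), S m p (Φh : D) = pos (Bop m p) * (Φh : D)) →
    (∀ (m : ℕ) (p : ℤ), Sh m p (Φ : D) = -(neg (Bhop m p)) * (Φ : D)) →
    (∀ (m : ℕ) (p : ℤ), Sh m p (Φh : D) = pos (Bhop m p) * (Φh : D)) →
    -- conclusion:
    (∀ (m m' : ℕ) (p p' : ℤ) (c : ℕ × ℤ →₀ ℤ),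
      -- the structure constants of the W_{1+∞} algebra …
      Bop m p * Bop m' p' - Bop m' p' * Bop m p
        = c.sum (fun nq k => k • Bop nq.1 nq.2) →
      -- … are also those for the hatted family
      Bhop m p * Bhop m' p' - Bhop m' p' * Bhop m p
        = c.sum (fun nq k => k • Bhop nq.1 nq.2) →
      -- [∂/∂β_{mp}, ∂/∂β_{m′p′}]Φ̃ = −Σ c^{nq} ∂Φ̃/∂β_{nq}
      ((S m p (S m' p' (Φ : D)) - S m' p' (S m p (Φ : D))
          = -(c.sum fun nq k => k • S nq.1 nq.2 (Φ : D))) ∧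
       (S m p (S m' p' (Φh : D)) - S m' p' (S m p (Φh : D))
          = -(c.sum fun nq k => k • S nq.1 nq.2 (Φh : D))) ∧
       -- [∂/∂β̂_{mp}, ∂/∂β̂_{m′p′}]Φ̃ = Σ c^{nq} ∂Φ̃/∂β̂_{nq}
       (Sh m p (Sh m' p' (Φ : D)) - Sh m' p' (Sh m p (Φ : D))
          = c.sum fun nq k => k • Sh nq.1 nq.2 (Φ : D)) ∧
       (Sh m p (Sh m' p' (Φh : D)) - Sh m' p' (Sh m p (Φh : D))
          = c.sum fun nq k => k • Sh nq.1 nq.2 (Φh : D)) ∧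
       -- [∂/∂β_{mp}, ∂/∂β̂_{m′p′}]Φ̃ = 0
       (S m p (Sh m' p' (Φ : D)) - Sh m' p' (S m p (Φ : D)) = 0) ∧
       (S m p (Sh m' p' (Φh : D)) - Sh m' p' (S m p (Φh : D)) = 0))) := by
  intro P Ph M Mh Bop Bhop hSΦ hSΦh hShΦ hShΦh m m' p p' c hc hch
  -- S and Sh commute with neg
  have Sν : ∀ (m₀ : ℕ) (p₀ : ℤ) (z : D), S m₀ p₀ (neg z) = neg (S m₀ p₀ z) := by
    intro m₀ p₀ z
    rw [W17.nu_def pos neg hsplit z, W17.Tsub (S m₀ p₀) (hS_add m₀ p₀), hS_pos,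
      W17.nu_def pos neg hsplit (S m₀ p₀ z)]
  have Shν : ∀ (m₀ : ℕ) (p₀ : ℤ) (z : D), Sh m₀ p₀ (neg z) = neg (Sh m₀ p₀ z) := by
    intro m₀ p₀ z
    rw [W17.nu_def pos neg hsplit z, W17.Tsub (Sh m₀ p₀) (hSh_add m₀ p₀), hSh_pos,
      W17.nu_def pos neg hsplit (Sh m₀ p₀ z)]
  -- derivatives of inverse del
  have Sdelinv : ∀ (m₀ : ℕ) (p₀ : ℤ), S m₀ p₀ ((del⁻¹ : Dˣ) : D) = 0 := by
    intro m₀ p₀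
    rw [W17.Tinv (S m₀ p₀) (hS_add m₀ p₀) (hS_mul m₀ p₀) del, hS_del]
    simp
  have Shdelinv : ∀ (m₀ : ℕ) (p₀ : ℤ), Sh m₀ p₀ ((del⁻¹ : Dˣ) : D) = 0 := by
    intro m₀ p₀
    rw [W17.Tinv (Sh m₀ p₀) (hSh_add m₀ p₀) (hSh_mul m₀ p₀) del, hSh_del]
    simp
  -- the four key commutator formulas
  have kS_B : ∀ (m₀ : ℕ) (p₀ : ℤ) (n : ℕ) (q : ℤ),
      S m₀ p₀ (Bop n q) = -(neg (Bop m₀ p₀)) * Bop n q - Bop n q * -(neg (Bop m₀ p₀)) :=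
    fun m₀ p₀ n q =>
      W17.keyB (S m₀ p₀) (hS_add m₀ p₀) (hS_mul m₀ p₀) (hS_del m₀ p₀) (hS_Ξ m₀ p₀)
        (hSΦ m₀ p₀) n q
  have kS_Bh : ∀ (m₀ : ℕ) (p₀ : ℤ) (n : ℕ) (q : ℤ),
      S m₀ p₀ (Bhop n q) = pos (Bop m₀ p₀) * Bhop n q - Bhop n q * pos (Bop m₀ p₀) :=
    fun m₀ p₀ n q =>
      W17.keyB (S m₀ p₀) (hS_add m₀ p₀) (hS_mul m₀ p₀) (Sdelinv m₀ p₀) (hS_Ξh m₀ p₀)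
        (hSΦh m₀ p₀) n (-q)
  have kSh_B : ∀ (m₀ : ℕ) (p₀ : ℤ) (n : ℕ) (q : ℤ),
      Sh m₀ p₀ (Bop n q) = -(neg (Bhop m₀ p₀)) * Bop n q - Bop n q * -(neg (Bhop m₀ p₀)) :=
    fun m₀ p₀ n q =>
      W17.keyB (Sh m₀ p₀) (hSh_add m₀ p₀) (hSh_mul m₀ p₀) (hSh_del m₀ p₀) (hSh_Ξ m₀ p₀)
        (hShΦ m₀ p₀) n q
  have kSh_Bh : ∀ (m₀ : ℕ) (p₀ : ℤ) (n : ℕ) (q : ℤ),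
      Sh m₀ p₀ (Bhop n q) = pos (Bhop m₀ p₀) * Bhop n q - Bhop n q * pos (Bhop m₀ p₀) :=
    fun m₀ p₀ n q =>
      W17.keyB (Sh m₀ p₀) (hSh_add m₀ p₀) (hSh_mul m₀ p₀) (Shdelinv m₀ p₀) (hSh_Ξh m₀ p₀)
        (hShΦh m₀ p₀) n (-q)
  refine ⟨?_, ?_, ?_, ?_, ?_, ?_⟩
  · -- case 1 : (β, β) on Φ
    have e1 : S m p (S m' p' (Φ : D)) - S m' p' (S m p (Φ : D))
        = (-neg (S m p (Bop m' p')) + neg (Bop m' p') * neg (Bop m p)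
            + neg (S m' p' (Bop m p)) - neg (Bop m p) * neg (Bop m' p')) * (Φ : D) := by
      rw [hSΦ m' p', hSΦ m p, hS_mul m p, hS_mul m' p',
        W17.Tneg (S m p) (hS_add m p), Sν m p,
        W17.Tneg (S m' p') (hS_add m' p'), Sν m' p',
        hSΦ m p, hSΦ m' p']
      noncomm_ring
    have e2 : neg (Bop m p * Bop m' p' - Bop m' p' * Bop m p) * (Φ : D)
        = -(c.sum fun nq k => k • S nq.1 nq.2 (Φ : D)) := by
      rw [hc, W17.hom_sum neg (W17.nu_add pos neg hsplit hpos_add) c (fun nq => Bop nq.1 nq.2)]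
      simp only [hSΦ]
      exact (W17.sum_neg_mul_helper c (fun nq => neg (Bop nq.1 nq.2)) ((Φ : D))).symm
    rw [e1, kS_B m p m' p', kS_B m' p' m p,
      W17.R1 pos neg hsplit hpos_add hpos_mul hneg_mul (Bop m p) (Bop m' p')]
    exact e2
  · -- case 2 : (β, β) on Φh
    have e1 : S m p (S m' p' (Φh : D)) - S m' p' (S m p (Φh : D))
        = (pos (S m p (Bop m' p')) + pos (Bop m' p') * pos (Bop m p)
            - pos (S m' p' (Bop m p)) - pos (Bop m p) * pos (Bop m' p')) * (Φh : D) := by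
      rw [hSΦh m' p', hSΦh m p, hS_mul m p, hS_mul m' p', hS_pos m p, hS_pos m' p',
        hSΦh m p, hSΦh m' p']
      noncomm_ring
    rw [e1, kS_B m p m' p', kS_B m' p' m p,
      W17.R2 pos neg hsplit hpos_add hpos_mul hneg_mul (Bop m p) (Bop m' p'),
      hc, W17.hom_sum pos hpos_add c (fun nq => Bop nq.1 nq.2)]
    simp only [hSΦh]
    rw [W17.sum_mul_helper c (fun nq => pos (Bop nq.1 nq.2)) ((Φh : D)), neg_mul]
  · -- case 3 : (β̂, β̂) on Φ
    have e1 : Sh m p (Sh m' p' (Φ : D)) - Sh m' p' (Sh m p (Φ : D))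
        = (-neg (Sh m p (Bhop m' p')) + neg (Bhop m' p') * neg (Bhop m p)
            + neg (Sh m' p' (Bhop m p)) - neg (Bhop m p) * neg (Bhop m' p')) * (Φ : D) := by
      rw [hShΦ m' p', hShΦ m p, hSh_mul m p, hSh_mul m' p',
        W17.Tneg (Sh m p) (hSh_add m p), Shν m p,
        W17.Tneg (Sh m' p') (hSh_add m' p'), Shν m' p',
        hShΦ m p, hShΦ m' p']
      noncomm_ring
    rw [e1, kSh_Bh m p m' p', kSh_Bh m' p' m p,
      W17.R3 pos neg hsplit hpos_add hpos_mul hneg_mul (Bhop m p) (Bhop m' p'),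
      hch, W17.hom_sum neg (W17.nu_add pos neg hsplit hpos_add) c (fun nq => Bhop nq.1 nq.2)]
    simp only [hShΦ]
    rw [neg_mul, ← W17.sum_neg_mul_helper c (fun nq => neg (Bhop nq.1 nq.2)) ((Φ : D)), neg_neg]
  · -- case 4 : (β̂, β̂) on Φh
    have e1 : Sh m p (Sh m' p' (Φh : D)) - Sh m' p' (Sh m p (Φh : D))
        = (pos (Sh m p (Bhop m' p')) + pos (Bhop m' p') * pos (Bhop m p)
            - pos (Sh m' p' (Bhop m p)) - pos (Bhop m p) * pos (Bhop m' p')) * (Φh : D) := by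
      rw [hShΦh m' p', hShΦh m p, hSh_mul m p, hSh_mul m' p', hSh_pos m p, hSh_pos m' p',
        hShΦh m p, hShΦh m' p']
      noncomm_ring
    rw [e1, kSh_Bh m p m' p', kSh_Bh m' p' m p,
      W17.R4 pos neg hsplit hpos_add hpos_mul hneg_mul (Bhop m p) (Bhop m' p'),
      hch, W17.hom_sum pos hpos_add c (fun nq => Bhop nq.1 nq.2)]
    simp only [hShΦh]
    rw [W17.sum_mul_helper c (fun nq => pos (Bhop nq.1 nq.2)) ((Φh : D))]
  · -- case 5 : mixed on Φ
    have e1 : S m p (Sh m' p' (Φ : D)) - Sh m' p' (S m p (Φ : D))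
        = (-neg (S m p (Bhop m' p')) + neg (Bhop m' p') * neg (Bop m p)
            + neg (Sh m' p' (Bop m p)) - neg (Bop m p) * neg (Bhop m' p')) * (Φ : D) := by
      rw [hShΦ m' p', hSΦ m p, hS_mul m p, hSh_mul m' p',
        W17.Tneg (S m p) (hS_add m p), Sν m p,
        W17.Tneg (Sh m' p') (hSh_add m' p'), Shν m' p',
        hSΦ m p, hShΦ m' p']
      noncomm_ring
    rw [e1, kS_Bh m p m' p', kSh_B m' p' m p,
      W17.R5 pos neg hsplit hpos_add hpos_mul hneg_mul (Bop m p) (Bhop m' p'), zero_mul]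
  · -- case 6 : mixed on Φh
    have e1 : S m p (Sh m' p' (Φh : D)) - Sh m' p' (S m p (Φh : D))
        = (pos (S m p (Bhop m' p')) + pos (Bhop m' p') * pos (Bop m p)
            - pos (Sh m' p' (Bop m p)) - pos (Bop m p) * pos (Bhop m' p')) * (Φh : D) := by
      rw [hShΦh m' p', hSΦh m p, hS_mul m p, hSh_mul m' p', hS_pos m p, hSh_pos m' p',
        hSΦh m p, hShΦh m' p']
      noncomm_ring
    rw [e1, kS_Bh m p m' p', kSh_B m' p' m p,
      W17.R6 pos neg hsplit hpos_add hpos_mul hneg_mul (Bop m p) (Bhop m' p'), zero_mul]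
end

section
/- For p ≥ −1 one has [S_p, L] = 0, so the flows ∂Φ/∂s_p = −(S_p)₋Φ, ∂Φ̂/∂s_p = (S_p)₊Φ̂ are consistent with the constraint Φ∂ⁿΦ⁻¹ = Φ̂∂⁻¹Φ̂⁻¹ = L, and they induce on L the equations ∂L/∂s_p = [−(S_p)₋, L] = [(S_p)₊, L]. Moreover, these reduced flows satisfy, for all k ≥ 1 and p, q ≥ −1: (i) [∂/∂t_k, ∂/∂s_p] L = 0; (ii) [∂/∂s_p, ∂/∂s_q] L = (q − p) ∂L/∂s_{p+q} (the Virasoro commutation relations). -/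
set_option linter.unusedSectionVars false
set_option linter.unusedTactic false
set_option maxHeartbeats 1000000

section Helpers

attribute [local instance] LieRing.ofAssociativeRing

variable {D : Type*} [Ring D]

private lemma lie_mul' (x y z : D) : ⁅x, y * z⁆ = ⁅x, y⁆ * z + y * ⁅x, z⁆ := by
  simp only [Ring.lie_def]; noncomm_ring

private lemma mul_lie' (x y z : D) : ⁅x * y, z⁆ = x * ⁅y, z⁆ + ⁅x, z⁆ * y := by
  simp only [Ring.lie_def]; noncomm_ring

section Der

variable (d : D → D) (hadd : ∀ x y, d (x + y) = d x + d y)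
  (hmul : ∀ x y, d (x * y) = d x * y + x * d y)

include hadd in
private lemma der_zero : d 0 = 0 := by
  have h := hadd 0 0
  simp only [add_zero] at h
  exact (add_left_cancel (a := d 0) (by rw [add_zero]; exact h)).symm

include hadd in
private lemma der_neg (x : D) : d (-x) = -d x := by
  have h := hadd x (-x)
  rw [add_neg_cancel, der_zero d hadd] at h
  exact (neg_eq_of_add_eq_zero_right h.symm).symm

include hadd in
private lemma der_sub (x y : D) : d (x - y) = d x - d y := by
  rw [sub_eq_add_neg, hadd, der_neg d hadd, sub_eq_add_neg]

include hadd hmul in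
private lemma der_lie (x y : D) : d ⁅x, y⁆ = ⁅d x, y⁆ + ⁅x, d y⁆ := by
  simp only [Ring.lie_def, der_sub d hadd, hmul]
  abel

include hmul in
private lemma der_one : d 1 = 0 := by
  have h := hmul 1 1
  simp only [one_mul, mul_one] at h
  exact (add_left_cancel (a := d 1) (by rw [add_zero]; exact h)).symm

include hmul in
private lemma der_inv (u : Dˣ) : d ↑u⁻¹ = -(↑u⁻¹ * d ↑u * ↑u⁻¹) := by
  have h0 : d ((u⁻¹ : Dˣ) * (u : D)) = 0 := by
    rw [Units.inv_mul]; exact der_one d hmul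
  rw [hmul] at h0
  have h1 : d ↑u⁻¹ * ↑u * ↑u⁻¹ + ↑u⁻¹ * d ↑u * ↑u⁻¹ = 0 := by
    rw [← add_mul, h0, zero_mul]
  have h2 : d ↑u⁻¹ * ↑u * ↑u⁻¹ = d ↑u⁻¹ := by
    rw [mul_assoc, Units.mul_inv, mul_one]
  rw [h2] at h1
  exact eq_neg_of_add_eq_zero_left h1

include hadd hmul in
private lemma der_zpow (u : Dˣ) (c : D) (hc : d ↑u = c)
    (hcomm : ∀ x : D, c * x = x * c) :
    ∀ m : ℤ, d ↑(u ^ m) = m • (c * ↑(u ^ (m - 1))) := by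
  have hmulz : ∀ a b : ℤ, (↑(u ^ a) : D) * ↑(u ^ b) = ↑(u ^ (a + b)) := by
    intro a b; rw [← Units.val_mul, ← zpow_add]
  intro m
  induction m using Int.induction_on with
  | zero => simp [der_one d hmul]
  | succ k ih =>
      have key1 : (↑(u ^ ((k : ℤ) - 1)) : D) * ↑u = ↑(u ^ (k : ℤ)) := by
        have := hmulz ((k : ℤ) - 1) 1
        simpa using this
      rw [zpow_add_one, Units.val_mul, hmul, ih, hc, smul_mul_assoc, mul_assoc,
        key1, ← hcomm, show ((k : ℤ) + 1) - 1 = (k : ℤ) by ring, add_smul, one_smul]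
  | pred k ih =>
      have hinv : d ↑u⁻¹ = -(c * ↑(u ^ (-2 : ℤ))) := by
        rw [der_inv d hmul u, hc]
        have h4 : (↑u⁻¹ : D) * c * ↑u⁻¹ = c * ↑(u ^ (-2 : ℤ)) := by
          rw [← hcomm, mul_assoc, ← zpow_neg_one, hmulz]
          norm_num
        rw [h4]
      have e1 : (↑(u ^ (-(k : ℤ) - 1)) : D) * ↑u⁻¹ = ↑(u ^ (-(k : ℤ) - 2)) := by
        rw [← zpow_neg_one, hmulz]
        norm_num
        rw [show (-(k:ℤ) - 1) + (-1) = -(k:ℤ) - 2 by ring]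
      have e2 : (↑(u ^ (-(k : ℤ))) : D) * (c * ↑(u ^ (-2 : ℤ)))
          = c * ↑(u ^ (-(k : ℤ) - 2)) := by
        rw [← mul_assoc, ← hcomm, mul_assoc, hmulz]
        rw [show (-(k:ℤ)) + (-2) = -(k:ℤ) - 2 by ring]
      rw [show (-(k : ℤ) - 1 : ℤ) = (-(k:ℤ)) + (-1) by ring, zpow_add,
        zpow_neg_one, Units.val_mul, hmul, ih, hinv, smul_mul_assoc, mul_assoc, e1,
        mul_neg, e2,
        show (-(k : ℤ) + -1) - 1 = -(k:ℤ) - 2 by ring,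
        add_smul]
      rw [show ((-1 : ℤ) • (c * ↑(u ^ (-(k:ℤ) - 2))) : D) = -(c * ↑(u ^ (-(k:ℤ) - 2))) from
        neg_one_zsmul _]

end Der

end Helpers

section Struct

attribute [local instance] LieRing.ofAssociativeRing

variable {D : Type*} [Ring D] [Algebra ℚ D]

private def C1 (pU : ℤ → D) (M : D) (n : ℕ) (r : ℤ) : D :=
  (n : ℚ)⁻¹ • (M * pU ((n : ℤ) * r + 1))

private def C2 (lU : ℤ → D) (Mh : D) (r : ℤ) : D := Mh * lU (r - 1)

variable (pU lU : ℤ → D) (M Mh : D) (n : ℕ) (hn : 1 ≤ n)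
  (hp : ∀ a b : ℤ, pU a * pU b = pU (a + b))
  (hpl : ∀ m : ℤ, pU ((n : ℤ) * m) = lU m)
  (hMp : ∀ m : ℤ, pU m * M = M * pU m + (m : ℚ) • pU (m - 1))
  (hMhl : ∀ m : ℤ, lU m * Mh = Mh * lU m - (m : ℚ) • lU (m + 1))

include hp hpl in
private lemma hlp : ∀ x m : ℤ, pU x * lU m = pU (x + (n : ℤ) * m) := by
  intro x m; rw [← hpl, hp]

include hp hpl in
private lemma hpl' : ∀ m x : ℤ, lU m * pU x = pU ((n : ℤ) * m + x) := by
  intro m x; rw [← hpl, hp]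

include hp hpl in
private lemma hl : ∀ a b : ℤ, lU a * lU b = lU (a + b) := by
  intro a b
  rw [← hpl a, hlp pU lU n hp hpl, show (n:ℤ)*a + (n:ℤ)*b = (n:ℤ)*(a+b) by ring, hpl]

include hp hpl in
private lemma lie_pU_lU (x m : ℤ) : ⁅pU x, lU m⁆ = 0 := by
  rw [Ring.lie_def, hlp pU lU n hp hpl, hpl' pU lU n hp hpl, sub_eq_zero]
  congr 1; ring

include hp in
private lemma lie_pU_pU (x m : ℤ) : ⁅pU x, pU m⁆ = 0 := by
  rw [Ring.lie_def, hp, hp, sub_eq_zero]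
  congr 1; ring

include hMp in
private lemma lie_M_pU (m : ℤ) : ⁅M, pU m⁆ = -((m : ℚ) • pU (m - 1)) := by
  rw [Ring.lie_def, hMp]; abel

include hp hpl hMp in
private lemma lie_M_lU (m : ℤ) :
    ⁅M, lU m⁆ = -((((n : ℤ) * m : ℤ) : ℚ) • pU ((n : ℤ) * m - 1)) := by
  rw [← hpl m, lie_M_pU pU M hMp]

include hMhl in
private lemma lie_Mh_lU (m : ℤ) : ⁅Mh, lU m⁆ = (m : ℚ) • lU (m + 1) := by
  rw [Ring.lie_def, hMhl]; abel

include hn hp hpl hMp in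
private lemma c1l (a m : ℤ) : ⁅C1 pU M n a, lU m⁆ = -((m : ℚ) • lU (a + m)) := by
  have hnne : (n : ℚ) ≠ 0 := Nat.cast_ne_zero.2 (by omega)
  rw [C1, smul_lie, mul_lie', lie_pU_lU pU lU n hp hpl,
    lie_M_lU pU lU M n hp hpl hMp, mul_zero, zero_add, neg_mul, smul_mul_assoc, hp,
    show ((n:ℤ)*m - 1) + ((n:ℤ)*a + 1) = (n:ℤ)*(a+m) by ring, hpl]
  rw [smul_neg, smul_smul]
  congr 1
  push_cast
  field_simp

include hn hp hMp in
private lemma c1p (a m : ℤ) :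
    ⁅C1 pU M n a, pU m⁆ = -(((m : ℚ) * (n : ℚ)⁻¹) • pU ((n : ℤ) * a + m)) := by
  rw [C1, smul_lie, mul_lie', lie_pU_pU pU hp, lie_M_pU pU M hMp, mul_zero, zero_add,
    neg_mul, smul_mul_assoc, hp, show (m - 1) + ((n:ℤ)*a + 1) = (n:ℤ)*a + m by ring]
  rw [smul_neg, smul_smul]
  congr 1
  ring

include hp hpl hMhl in
private lemma c2l (a m : ℤ) : ⁅C2 lU Mh a, lU m⁆ = (m : ℚ) • lU (a + m) := by
  have h0 : ⁅lU (a-1), lU m⁆ = 0 := by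
    rw [Ring.lie_def, hl pU lU n hp hpl, hl pU lU n hp hpl, sub_eq_zero]
    congr 1; ring
  rw [C2, mul_lie', h0, mul_zero, zero_add, lie_Mh_lU lU Mh hMhl, smul_mul_assoc,
    hl pU lU n hp hpl, show (m + 1) + (a - 1) = a + m by ring]

include hp hMp in
private lemma prod1 (A B : ℤ) :
    (M * pU A) * (M * pU B) = M * (M * pU (A + B)) + (A : ℚ) • (M * pU (A + B - 1)) := by
  have h1 : (M * pU A) * (M * pU B) = M * ((pU A * M) * pU B) := by
    noncomm_ring
  rw [h1, hMp, add_mul, smul_mul_assoc, hp, mul_assoc M (pU A) (pU B), hp, mul_add,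
    mul_smul_comm, show (A - 1) + B = A + B - 1 by ring]

include hn hp hMp in
private lemma c1c1 (a b : ℤ) :
    ⁅C1 pU M n a, C1 pU M n b⁆ = ((a - b : ℤ) : ℚ) • C1 pU M n (a + b) := by
  have hnne : (n : ℚ) ≠ 0 := Nat.cast_ne_zero.2 (by omega)
  rw [C1, C1, C1, smul_lie, lie_smul, Ring.lie_def,
    prod1 pU M hp hMp, prod1 pU M hp hMp,
    show ((n:ℤ)*b + 1) + ((n:ℤ)*a + 1) = ((n:ℤ)*a + 1) + ((n:ℤ)*b + 1) by ring]
  rw [show ∀ X Y : D, ∀ c d : ℚ, (X + c • Y) - (X + d • Y) = (c - d) • Y from by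
    intro X Y c d; rw [sub_smul]; abel]
  rw [show ((n:ℤ)*a + 1) + ((n:ℤ)*b + 1) - 1 = (n:ℤ)*(a+b) + 1 by ring]
  rw [smul_smul, smul_smul, smul_smul]
  congr 1
  push_cast
  field_simp
  ring

include hp hpl hMhl in
private lemma prod2 (A B : ℤ) :
    (Mh * lU A) * (Mh * lU B)
      = Mh * (Mh * lU (A + B)) - (A : ℚ) • (Mh * lU (A + B + 1)) := by
  have h1 : (Mh * lU A) * (Mh * lU B) = Mh * ((lU A * Mh) * lU B) := by
    noncomm_ring
  rw [h1, hMhl, sub_mul, smul_mul_assoc, hl pU lU n hp hpl,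
    mul_assoc Mh (lU A) (lU B), hl pU lU n hp hpl, mul_sub,
    mul_smul_comm, show (A + 1) + B = A + B + 1 by ring]

include hp hpl hMhl in
private lemma c2c2 (a b : ℤ) :
    ⁅C2 lU Mh a, C2 lU Mh b⁆ = ((b - a : ℤ) : ℚ) • C2 lU Mh (a + b) := by
  rw [C2, C2, C2, Ring.lie_def, prod2 pU lU Mh n hp hpl hMhl,
    prod2 pU lU Mh n hp hpl hMhl,
    show (b - 1) + (a - 1) = (a - 1) + (b - 1) by ring]
  rw [show ∀ X Y : D, ∀ c d : ℚ, (X - c • Y) - (X - d • Y) = (d - c) • Y from by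
    intro X Y c d; rw [sub_smul]; abel]
  rw [show (a - 1) + (b - 1) + 1 = (a + b) - 1 by ring]
  congr 1
  push_cast
  ring

include hn hp hpl hMp hMhl in
private lemma SL (a : ℤ) : ⁅C1 pU M n a + C2 lU Mh a, lU 1⁆ = 0 := by
  rw [add_lie, c1l pU lU M n hn hp hpl hMp, c2l pU lU Mh n hp hpl hMhl]
  abel

end Struct

theorem stmt_18 {D : Type*} [Ring D] [Algebra ℚ D]
    (pos neg : D → D)
    (hsplit : ∀ x, pos x + neg x = x)
    (hpos_add : ∀ x y, pos (x + y) = pos x + pos y)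
    (hpos_smul : ∀ (c : ℚ) x, pos (c • x) = c • pos x)
    (hpos_idem : ∀ x, pos (pos x) = pos x)
    (hpos_mul : ∀ x y, pos (pos x * pos y) = pos x * pos y)
    (hneg_mul : ∀ x y, neg (neg x * neg y) = neg x * neg y)
    (hpos_one : pos 1 = 1)
    (del Φ Φh : Dˣ)
    (hdel_pos : pos (del : D) = (del : D))
    -- the constraint Φ∂ⁿΦ⁻¹ = Φ̂∂⁻¹Φ̂⁻¹ (a fixed positive integer n)
    (n : ℕ) (hn : 1 ≤ n)
    (hcon : Φ * del ^ n * Φ⁻¹ = Φh * del⁻¹ * Φh⁻¹)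
    -- Ξ = Σ k t_k ∂^{k−1} and x (the latter entering M̂ = Φ̂xΦ̂⁻¹)
    (Ξ X1 : D)
    (hΞ_del : (del : D) * Ξ - Ξ * (del : D) = 1)
    (hX1_del : (del : D) * X1 - X1 * (del : D) = 1)
    -- the hierarchy flows
    (T : ℕ → D → D)
    (hT_add : ∀ k x y, T k (x + y) = T k x + T k y)
    (hT_mul : ∀ k x y, T k (x * y) = T k x * y + x * T k y)
    (hT_smul : ∀ k (c : ℚ) x, T k (c • x) = c • T k x)
    (hT_pos : ∀ k x, T k (pos x) = pos (T k x))
    (hT_del : ∀ k, T k (del : D) = 0)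
    (hΞ_T : ∀ k : ℕ, 1 ≤ k →
      T k Ξ = (k : ℤ) • ((del ^ ((k : ℤ) - 1) : Dˣ) : D))
    (hX1_T : ∀ k : ℕ, 1 ≤ k → T k X1 = if k = 1 then 1 else 0)
    -- the Virasoro flows ∂/∂s_p
    (s : ℤ → D → D)
    (hs_add : ∀ p x y, s p (x + y) = s p x + s p y)
    (hs_mul : ∀ p x y, s p (x * y) = s p x * y + x * s p y)
    (hs_smul : ∀ p (c : ℚ) x, s p (c • x) = c • s p x)
    (hs_pos : ∀ p x, s p (pos x) = pos (s p x))
    (hs_del : ∀ p, s p (del : D) = 0)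
    (hs_Ξ : ∀ p, s p Ξ = 0) (hs_X1 : ∀ p, s p X1 = 0) :
    let P : Dˣ := Φ * del * Φ⁻¹
    let L : Dˣ := Φh * del⁻¹ * Φh⁻¹
    let M : D := (Φ : D) * Ξ * ((Φ⁻¹ : Dˣ) : D)
    let Mh : D := (Φh : D) * X1 * ((Φh⁻¹ : Dˣ) : D)
    let Sp : ℤ → D := fun p =>
      (n : ℚ)⁻¹ • (M * ((P ^ ((n : ℤ) * p + 1) : Dˣ) : D))
        + Mh * ((L ^ (p - 1) : Dˣ) : D)
    -- the flows of the cKP hierarchy: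
    (∀ k : ℕ, 1 ≤ k →
      T k (Φ : D) = -(neg ((P ^ k : Dˣ) : D)) * (Φ : D)) →
    (∀ k : ℕ, 1 ≤ k →
      T k (Φh : D)
        = (pos ((P ^ k : Dˣ) : D) - (if k = 1 then ((L⁻¹ : Dˣ) : D) else 0))
            * (Φh : D)) →
    -- the Virasoro flows of the dressing operators (p ≥ −1):
    (∀ p : ℤ, -1 ≤ p → s p (Φ : D) = -(neg (Sp p)) * (Φ : D)) →
    (∀ p : ℤ, -1 ≤ p → s p (Φh : D) = pos (Sp p) * (Φh : D)) →
    -- conclusions: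
    ((∀ p : ℤ, -1 ≤ p →
       -- [S_p, L] = 0: consistency with the constraint
       Sp p * (L : D) - (L : D) * Sp p = 0 ∧
       -- the induced flow on L: ∂L/∂s_p = [−(S_p)₋, L] = [(S_p)₊, L]
       s p (L : D) = -(neg (Sp p)) * (L : D) - (L : D) * -(neg (Sp p)) ∧
       s p (L : D) = pos (Sp p) * (L : D) - (L : D) * pos (Sp p)) ∧
     -- (i) the Virasoro flows are symmetries of the cKP hierarchy
     (∀ (k : ℕ) (p : ℤ), 1 ≤ k → -1 ≤ p →
       T k (s p (L : D)) = s p (T k (L : D))) ∧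
     -- (ii) the Virasoro commutation relations
     (∀ p q : ℤ, -1 ≤ p → -1 ≤ q →
       s p (s q (L : D)) - s q (s p (L : D)) = (q - p) • s (p + q) (L : D))) := by
  intro P L M Mh Sp hTΦ hTΦh hsΦ hsΦh
  letI : LieRing D := LieRing.ofAssociativeRing
  classical
  -- basic unit-power facts
  have hPz : ∀ m : ℤ, ((P ^ m : Dˣ) : D) = ↑Φ * ↑(del ^ m) * ↑Φ⁻¹ := by
    intro m
    show ((((Φ * del * Φ⁻¹ : Dˣ)) ^ m : Dˣ) : D) = _
    rw [conj_zpow, Units.val_mul, Units.val_mul]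
  have hLz : ∀ m : ℤ, ((L ^ m : Dˣ) : D) = ↑Φh * ↑(del ^ (-m)) * ↑Φh⁻¹ := by
    intro m
    show ((((Φh * del⁻¹ * Φh⁻¹ : Dˣ)) ^ m : Dˣ) : D) = _
    rw [conj_zpow, inv_zpow, ← zpow_neg, Units.val_mul, Units.val_mul]
  have hPn : P ^ (n : ℤ) = L := by
    show (Φ * del * Φ⁻¹ : Dˣ) ^ (n:ℤ) = L
    rw [zpow_natCast, conj_pow, hcon]
  have hp : ∀ a b : ℤ, ((P^a : Dˣ):D) * ((P^b : Dˣ):D) = ((P^(a+b) : Dˣ):D) := by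
    intro a b; rw [← Units.val_mul, ← zpow_add]
  have hpl : ∀ m : ℤ, ((P^((n:ℤ)*m) : Dˣ):D) = ((L^m : Dˣ):D) := by
    intro m; rw [zpow_mul, hPn]
  -- ad-derivation facts for powers of del
  have hdelXi : ∀ m : ℤ, (↑(del^m):D) * Ξ = Ξ * ↑(del^m) + (m:ℚ) • ↑(del^(m-1)) := by
    intro m
    have h := der_zpow (fun x => x * Ξ - Ξ * x)
      (by intro x y; beta_reduce; noncomm_ring)
      (by intro x y; beta_reduce; noncomm_ring) del 1 (by simpa using hΞ_del)
      (by intro x; rw [one_mul, mul_one]) m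
    simp only [one_mul] at h
    rw [sub_eq_iff_eq_add] at h
    rw [h, ← Int.cast_smul_eq_zsmul ℚ]
    exact add_comm _ _
  have hdelX1c : ∀ m : ℤ, (↑(del^m):D) * X1 = X1 * ↑(del^m) + (m:ℚ) • ↑(del^(m-1)) := by
    intro m
    have h := der_zpow (fun x => x * X1 - X1 * x)
      (by intro x y; beta_reduce; noncomm_ring)
      (by intro x y; beta_reduce; noncomm_ring) del 1 (by simpa using hX1_del)
      (by intro x; rw [one_mul, mul_one]) m
    simp only [one_mul] at h
    rw [sub_eq_iff_eq_add] at h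
    rw [h, ← Int.cast_smul_eq_zsmul ℚ]
    exact add_comm _ _
  have cj : ∀ (Ψ : Dˣ) (x y : D), (↑Ψ * x * ↑Ψ⁻¹) * (↑Ψ * y * ↑Ψ⁻¹) = ↑Ψ * (x*y) * ↑Ψ⁻¹ := by
    intro Ψ x y
    simp [mul_assoc]
  have hMdef : M = ↑Φ * Ξ * ↑Φ⁻¹ := rfl
  have hMhdef : Mh = ↑Φh * X1 * ↑Φh⁻¹ := rfl
  have hMp : ∀ m : ℤ, ((P^m:Dˣ):D) * M = M * ((P^m:Dˣ):D) + (m:ℚ) • ((P^(m-1):Dˣ):D) := by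
    intro m
    rw [hPz m, hPz (m-1), hMdef, cj, cj, hdelXi m, mul_add, add_mul, mul_smul_comm,
      smul_mul_assoc]
  have hMhl : ∀ m : ℤ, ((L^m:Dˣ):D) * Mh
      = Mh * ((L^m:Dˣ):D) - (m:ℚ) • ((L^(m+1):Dˣ):D) := by
    intro m
    have h := hdelX1c (-m)
    rw [show (-m - 1 : ℤ) = -(m+1) by ring] at h
    push_cast at h
    rw [hLz m, hLz (m+1), hMhdef, cj, cj, h, mul_add, add_mul, mul_smul_comm,
      smul_mul_assoc, neg_smul, ← sub_eq_add_neg]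
  -- bracket forms
  have hppz : ∀ a b : ℤ, ⁅((P^a : Dˣ):D), ((P^b : Dˣ):D)⁆ = 0 := by
    intro a b; rw [Ring.lie_def, hp, hp, sub_eq_zero]; congr 1; ring
  have hMpLie : ∀ m : ℤ, ⁅M, ((P^m : Dˣ):D)⁆ = -((m:ℚ) • ((P^(m-1) : Dˣ):D)) := by
    intro m; rw [Ring.lie_def, hMp]; abel
  have hMhlLie : ∀ m : ℤ, ⁅Mh, ((L^m : Dˣ):D)⁆ = (m:ℚ) • ((L^(m+1) : Dˣ):D) := by
    intro m; rw [Ring.lie_def, hMhl]; abel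
  -- pos/neg facts
  have hpos_neg : ∀ x, pos (-x) = -pos x := by
    intro x
    have h := hpos_smul (-1) x
    simpa using h
  have hpos_sub : ∀ x y, pos (x - y) = pos x - pos y := by
    intro x y
    rw [sub_eq_add_neg, hpos_add, hpos_neg, ← sub_eq_add_neg]
  have hnegdef : ∀ x, neg x = x - pos x := by
    intro x; rw [eq_sub_iff_add_eq, add_comm]; exact hsplit x
  have hposdef : ∀ x, pos x = x - neg x := by
    intro x; rw [eq_sub_iff_add_eq]; exact hsplit x
  have hposlie_pp : ∀ x y, pos ⁅pos x, pos y⁆ = ⁅pos x, pos y⁆ := by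
    intro x y
    rw [Ring.lie_def, hpos_sub, hpos_mul, hpos_mul, ← Ring.lie_def]
  have hposmul_nn : ∀ z w, pos (neg z * neg w) = 0 := by
    intro z w
    have h2 := hsplit (neg z * neg w)
    rw [hneg_mul] at h2
    exact add_eq_right.mp h2
  have hposlie_nn : ∀ x y, pos ⁅neg x, neg y⁆ = 0 := by
    intro x y
    rw [Ring.lie_def, hpos_sub, hposmul_nn, hposmul_nn, sub_zero]
  -- generic conjugated-flow lemma
  have conj_flow : ∀ (d : D → D), (∀ x y, d (x + y) = d x + d y) →
      (∀ x y, d (x * y) = d x * y + x * d y) →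
      ∀ (Ψ : Dˣ) (g x : D), d ↑Ψ = g * ↑Ψ →
      d (↑Ψ * x * ↑Ψ⁻¹) = ⁅g, ↑Ψ * x * ↑Ψ⁻¹⁆ + ↑Ψ * d x * ↑Ψ⁻¹ := by
    intro d hadd hmul Ψ g x hg
    have hinv : d ↑Ψ⁻¹ = -(↑Ψ⁻¹ * g) := by
      rw [der_inv d hmul, hg, ← mul_assoc, Units.mul_inv_cancel_right]
    rw [hmul, hmul, hg, hinv, Ring.lie_def]
    noncomm_ring
  have hdelz : ∀ (d : D → D), (∀ x y, d (x + y) = d x + d y) →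
      (∀ x y, d (x * y) = d x * y + x * d y) → d ↑del = 0 →
      ∀ m : ℤ, d ↑(del^m) = 0 := by
    intro d hadd hmul h0 m
    have h := der_zpow d hadd hmul del 0 h0 (by intro x; rw [zero_mul, mul_zero]) m
    simpa using h
  -- s-flow facts
  have hsP : ∀ p : ℤ, -1 ≤ p → ∀ m : ℤ,
      s p ((P^m : Dˣ):D) = ⁅((P^m : Dˣ):D), neg (Sp p)⁆ := by
    intro p hp' m
    have h := conj_flow (s p) (hs_add p) (hs_mul p) Φ (-(neg (Sp p))) ↑(del^m) (hsΦ p hp')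
    rw [hdelz (s p) (hs_add p) (hs_mul p) (hs_del p) m, mul_zero, zero_mul, add_zero,
      neg_lie, lie_skew] at h
    rw [hPz m]
    exact h
  have hsM : ∀ p : ℤ, -1 ≤ p → s p M = ⁅M, neg (Sp p)⁆ := by
    intro p hp'
    have h := conj_flow (s p) (hs_add p) (hs_mul p) Φ (-(neg (Sp p))) Ξ (hsΦ p hp')
    rw [hs_Ξ p, mul_zero, zero_mul, add_zero, neg_lie, lie_skew] at h
    rw [hMdef]
    exact h
  have hsLm : ∀ p : ℤ, -1 ≤ p → ∀ m : ℤ,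
      s p ((L^m : Dˣ):D) = ⁅pos (Sp p), ((L^m : Dˣ):D)⁆ := by
    intro p hp' m
    have h := conj_flow (s p) (hs_add p) (hs_mul p) Φh (pos (Sp p)) ↑(del^(-m)) (hsΦh p hp')
    rw [hdelz (s p) (hs_add p) (hs_mul p) (hs_del p) (-m), mul_zero, zero_mul, add_zero] at h
    rw [hLz m]
    exact h
  have hsMh : ∀ p : ℤ, -1 ≤ p → s p Mh = ⁅pos (Sp p), Mh⁆ := by
    intro p hp'
    have h := conj_flow (s p) (hs_add p) (hs_mul p) Φh (pos (Sp p)) X1 (hsΦh p hp')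
    rw [hs_X1 p, mul_zero, zero_mul, add_zero] at h
    rw [hMhdef]
    exact h
  have hsL : ∀ p : ℤ, -1 ≤ p → s p (↑L : D) = ⁅pos (Sp p), (↑L : D)⁆ := by
    intro p hp'
    have h := hsLm p hp' 1
    rwa [zpow_one] at h
  -- abstract structure facts, beta-reduced
  have Hc1l : ∀ a m : ℤ, ⁅(n:ℚ)⁻¹ • (M * ((P^((n:ℤ)*(a)+1) : Dˣ):D)), ((L^m : Dˣ):D)⁆ = -((m:ℚ) • ((L^(a+m) : Dˣ):D)) := by
    intro a m
    simpa only [C1] using c1l (fun m : ℤ => ((P^m : Dˣ):D)) (fun m : ℤ => ((L^m : Dˣ):D)) M n hn hp hpl hMp a m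
  have Hc2l : ∀ a m : ℤ, ⁅Mh * ((L^((a)-1) : Dˣ):D), ((L^m : Dˣ):D)⁆ = (m:ℚ) • ((L^(a+m) : Dˣ):D) := by
    intro a m
    simpa only [C2] using c2l (fun m : ℤ => ((P^m : Dˣ):D)) (fun m : ℤ => ((L^m : Dˣ):D)) Mh n hp hpl hMhl a m
  have Hc1p : ∀ a m : ℤ, ⁅(n:ℚ)⁻¹ • (M * ((P^((n:ℤ)*(a)+1) : Dˣ):D)), ((P^m : Dˣ):D)⁆
      = -(((m:ℚ) * (n:ℚ)⁻¹) • ((P^((n:ℤ)*a+m) : Dˣ):D)) := by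
    intro a m
    simpa only [C1] using c1p (fun m : ℤ => ((P^m : Dˣ):D)) M n hn hp hMp a m
  have Hc1c1 : ∀ a b : ℤ, ⁅(n:ℚ)⁻¹ • (M * ((P^((n:ℤ)*(a)+1) : Dˣ):D)), (n:ℚ)⁻¹ • (M * ((P^((n:ℤ)*(b)+1) : Dˣ):D))⁆ = ((a-b:ℤ):ℚ) • ((n:ℚ)⁻¹ • (M * ((P^((n:ℤ)*(a+b)+1) : Dˣ):D))) := by
    intro a b
    simpa only [C1] using c1c1 (fun m : ℤ => ((P^m : Dˣ):D)) M n hn hp hMp a b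
  have Hc2c2 : ∀ a b : ℤ, ⁅Mh * ((L^((a)-1) : Dˣ):D), Mh * ((L^((b)-1) : Dˣ):D)⁆ = ((b-a:ℤ):ℚ) • (Mh * ((L^((a+b)-1) : Dˣ):D)) := by
    intro a b
    simpa only [C2] using c2c2 (fun m : ℤ => ((P^m : Dˣ):D)) (fun m : ℤ => ((L^m : Dˣ):D)) Mh n hp hpl hMhl a b
  have HSL : ∀ a : ℤ, ⁅(n:ℚ)⁻¹ • (M * ((P^((n:ℤ)*(a)+1) : Dˣ):D)) + Mh * ((L^((a)-1) : Dˣ):D), (↑L : D)⁆ = 0 := by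
    intro a
    have h := SL (fun m : ℤ => ((P^m : Dˣ):D)) (fun m : ℤ => ((L^m : Dˣ):D)) M Mh n hn hp hpl hMp hMhl a
    simp only [C1, C2] at h
    rwa [zpow_one] at h
  have hSpC : ∀ r : ℤ, Sp r = (n:ℚ)⁻¹ • (M * ((P^((n:ℤ)*(r)+1) : Dˣ):D)) + Mh * ((L^((r)-1) : Dˣ):D) := fun r => rfl
  have HSpL : ∀ r : ℤ, ⁅Sp r, (↑L : D)⁆ = 0 := by
    intro r
    rw [hSpC r]
    exact HSL r
  -- s-flow on C1, C2, Sp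
  have hsC1 : ∀ p : ℤ, -1 ≤ p → ∀ r : ℤ,
      s p ((n:ℚ)⁻¹ • (M * ((P^((n:ℤ)*(r)+1) : Dˣ):D))) = ⁅(n:ℚ)⁻¹ • (M * ((P^((n:ℤ)*(r)+1) : Dˣ):D)), neg (Sp p)⁆ := by
    intro p hp' r
    rw [hs_smul, hs_mul, hsM p hp', hsP p hp' _, smul_lie, mul_lie' M _ (neg (Sp p))]
    congr 1
    abel
  have hsC2 : ∀ p : ℤ, -1 ≤ p → ∀ r : ℤ,
      s p (Mh * ((L^((r)-1) : Dˣ):D)) = ⁅pos (Sp p), Mh * ((L^((r)-1) : Dˣ):D)⁆ := by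
    intro p hp' r
    rw [hs_mul, hsMh p hp', hsLm p hp' _, ← lie_mul']
  have hsSp : ∀ p : ℤ, -1 ≤ p → ∀ r : ℤ,
      s p (Sp r) = ⁅(n:ℚ)⁻¹ • (M * ((P^((n:ℤ)*(r)+1) : Dˣ):D)), neg (Sp p)⁆ + ⁅pos (Sp p), Mh * ((L^((r)-1) : Dˣ):D)⁆ := by
    intro p hp' r
    rw [hSpC r, hs_add, hsC1 p hp' r, hsC2 p hp' r]
  -- T-flow facts
  have hlz : ∀ a b : ℤ, ((L^a : Dˣ):D) * ((L^b : Dˣ):D) = ((L^(a+b) : Dˣ):D) := by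
    intro a b; rw [← Units.val_mul, ← zpow_add]
  have hllz : ∀ a b : ℤ, ⁅((L^a : Dˣ):D), ((L^b : Dˣ):D)⁆ = 0 := by
    intro a b; rw [Ring.lie_def, hlz, hlz, sub_eq_zero]; congr 1; ring
  have hTΦz : ∀ k : ℕ, 1 ≤ k → T k (↑Φ:D) = -(neg ((P^(k:ℤ) : Dˣ):D)) * ↑Φ := by
    intro k hk
    have h := hTΦ k hk
    rwa [← zpow_natCast P k] at h
  have hTΦhz : ∀ k : ℕ, 1 ≤ k → T k (↑Φh:D)
      = (pos ((P^(k:ℤ) : Dˣ):D) - (if k = 1 then ((L^(-1:ℤ) : Dˣ):D) else 0)) * ↑Φh := by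
    intro k hk
    have h := hTΦh k hk
    rw [← zpow_natCast P k] at h
    rwa [show ((L⁻¹ : Dˣ):D) = ((L^(-1:ℤ) : Dˣ):D) from by rw [zpow_neg_one]] at h
  have hTP : ∀ k : ℕ, 1 ≤ k → ∀ m : ℤ,
      T k ((P^m : Dˣ):D) = ⁅((P^m : Dˣ):D), neg ((P^(k:ℤ) : Dˣ):D)⁆ := by
    intro k hk m
    have h := conj_flow (T k) (hT_add k) (hT_mul k) Φ (-(neg ((P^(k:ℤ) : Dˣ):D)))
      ↑(del^m) (hTΦz k hk)
    rw [hdelz (T k) (hT_add k) (hT_mul k) (hT_del k) m, mul_zero, zero_mul, add_zero,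
      neg_lie, lie_skew] at h
    rw [hPz m]
    exact h
  have hTM : ∀ k : ℕ, 1 ≤ k →
      T k M = ⁅M, neg ((P^(k:ℤ) : Dˣ):D)⁆ + (k:ℚ) • ((P^((k:ℤ)-1) : Dˣ):D) := by
    intro k hk
    have h := conj_flow (T k) (hT_add k) (hT_mul k) Φ (-(neg ((P^(k:ℤ) : Dˣ):D)))
      Ξ (hTΦz k hk)
    rw [hΞ_T k hk, neg_lie, lie_skew] at h
    rw [hMdef, h]
    congr 1
    rw [mul_smul_comm, smul_mul_assoc, ← hPz, ← Int.cast_smul_eq_zsmul ℚ]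
    norm_num
  have hTLm : ∀ k : ℕ, 1 ≤ k → ∀ m : ℤ,
      T k ((L^m : Dˣ):D)
        = ⁅pos ((P^(k:ℤ) : Dˣ):D) - (if k = 1 then ((L^(-1:ℤ) : Dˣ):D) else 0),
            ((L^m : Dˣ):D)⁆ := by
    intro k hk m
    have h := conj_flow (T k) (hT_add k) (hT_mul k) Φh _ ↑(del^(-m)) (hTΦhz k hk)
    rw [hdelz (T k) (hT_add k) (hT_mul k) (hT_del k) (-m), mul_zero, zero_mul,
      add_zero] at h
    rw [hLz m]
    exact h
  have hTMh : ∀ k : ℕ, 1 ≤ k →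
      T k Mh = ⁅pos ((P^(k:ℤ) : Dˣ):D) - (if k = 1 then ((L^(-1:ℤ) : Dˣ):D) else 0), Mh⁆
        + (if k = 1 then (1:D) else 0) := by
    intro k hk
    have h := conj_flow (T k) (hT_add k) (hT_mul k) Φh _ X1 (hTΦhz k hk)
    rw [hX1_T k hk] at h
    rw [hMhdef, h]
    congr 1
    by_cases hk1 : k = 1
    · simp [hk1]
    · simp [hk1]
  have hTC1 : ∀ k : ℕ, 1 ≤ k → ∀ r : ℤ,
      T k ((n:ℚ)⁻¹ • (M * ((P^((n:ℤ)*(r)+1) : Dˣ):D))) = ⁅pos ((P^(k:ℤ) : Dˣ):D), (n:ℚ)⁻¹ • (M * ((P^((n:ℤ)*(r)+1) : Dˣ):D))⁆ := by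
    intro k hk r
    rw [hT_smul, hT_mul, hTM k hk, hTP k hk _, lie_smul]
    congr 1
    have hkey : ⁅((P^(k:ℤ) : Dˣ):D), M * ((P^((n:ℤ)*r+1) : Dˣ):D)⁆
        = ((k:ℚ) • ((P^((k:ℤ)-1) : Dˣ):D)) * ((P^((n:ℤ)*r+1) : Dˣ):D) := by
      rw [← lie_skew, mul_lie' M _ _, hppz, mul_zero, hMpLie, zero_add, neg_mul, neg_neg]
      norm_cast
    rw [hposdef ((P^(k:ℤ) : Dˣ):D), sub_lie, hkey]
    generalize ((k:ℚ) • ((P^((k:ℤ)-1) : Dˣ):D) : D) = w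
    simp only [Ring.lie_def]
    noncomm_ring
  have hTC2 : ∀ k : ℕ, 1 ≤ k → ∀ r : ℤ,
      T k (Mh * ((L^((r)-1) : Dˣ):D)) = ⁅pos ((P^(k:ℤ) : Dˣ):D), Mh * ((L^((r)-1) : Dˣ):D)⁆ := by
    intro k hk r
    rw [hT_mul, hTMh k hk, hTLm k hk _]
    by_cases hk1 : k = 1
    · simp only [if_pos hk1]
      have h1 : ⁅((L^(-1:ℤ) : Dˣ):D), Mh⁆ = 1 := by
        rw [← lie_skew, hMhlLie, show (-1+1 : ℤ) = 0 by ring]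
        simp
      have h2 : ⁅((L^(-1:ℤ) : Dˣ):D), ((L^(r-1) : Dˣ):D)⁆ = 0 := hllz _ _
      rw [sub_lie, sub_lie, h1, h2, sub_zero,
        show ∀ x : D, x - 1 + 1 = x from fun x => by abel, ← lie_mul']
    · simp only [if_neg hk1, sub_zero, add_zero]
      rw [← lie_mul']
  have hTSp : ∀ k : ℕ, 1 ≤ k → ∀ r : ℤ, T k (Sp r) = ⁅pos ((P^(k:ℤ) : Dˣ):D), Sp r⁆ := by
    intro k hk r
    rw [hSpC r, hT_add, hTC1 k hk r, hTC2 k hk r, lie_add]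
  have hTL : ∀ k : ℕ, 1 ≤ k → T k (↑L:D) = ⁅pos ((P^(k:ℤ) : Dˣ):D), (↑L:D)⁆ := by
    intro k hk
    have h := hTLm k hk 1
    rw [zpow_one] at h
    rw [h, sub_lie]
    by_cases hk1 : k = 1
    · rw [if_pos hk1]
      have h2 : ⁅((L^(-1:ℤ) : Dˣ):D), (↑L:D)⁆ = 0 := by
        have h3 := hllz (-1) 1
        rwa [zpow_one] at h3
      rw [h2, sub_zero]
    · rw [if_neg hk1, zero_lie, sub_zero]
  -- === conclusions ===
  refine ⟨?_, ?_, ?_⟩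
  · -- conclusion 1
    intro p hp'
    refine ⟨?_, ?_, ?_⟩
    · have h := HSpL p
      rw [Ring.lie_def] at h
      exact h
    · rw [show (-neg (Sp p) * (↑L:D) - ↑L * -neg (Sp p) : D) = ⁅-neg (Sp p), (↑L:D)⁆ from
        (Ring.lie_def _ _).symm,
        show (-neg (Sp p) : D) = pos (Sp p) - Sp p from by rw [hnegdef]; abel,
        sub_lie, HSpL p, sub_zero]
      exact hsL p hp'
    · rw [show (pos (Sp p) * (↑L:D) - ↑L * pos (Sp p) : D) = ⁅pos (Sp p), (↑L:D)⁆ from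
        (Ring.lie_def _ _).symm]
      exact hsL p hp'
  · -- conclusion (i)
    intro k p hk hp'
    have e1 : T k (s p (↑L:D))
        = ⁅pos ⁅pos ((P^(k:ℤ) : Dˣ):D), Sp p⁆, (↑L:D)⁆ + ⁅pos (Sp p), ⁅pos ((P^(k:ℤ) : Dˣ):D), (↑L:D)⁆⁆ := by
      rw [hsL p hp', der_lie (T k) (hT_add k) (hT_mul k), hT_pos, hTSp k hk p, hTL k hk]
    have e2 : s p (T k (↑L:D))
        = ⁅pos ⁅((P^(k:ℤ) : Dˣ):D), neg (Sp p)⁆, (↑L:D)⁆ + ⁅pos ((P^(k:ℤ) : Dˣ):D), ⁅pos (Sp p), (↑L:D)⁆⁆ := by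
      rw [hTL k hk, der_lie (s p) (hs_add p) (hs_mul p), hs_pos, hsP p hp' (k:ℤ), hsL p hp']
    rw [e1, e2]
    have key : pos ⁅pos ((P^(k:ℤ) : Dˣ):D), Sp p⁆
        = pos ⁅((P^(k:ℤ) : Dˣ):D), neg (Sp p)⁆ + ⁅pos ((P^(k:ℤ) : Dˣ):D), pos (Sp p)⁆ := by
      have expand : ⁅pos ((P^(k:ℤ) : Dˣ):D), Sp p⁆ - ⁅((P^(k:ℤ) : Dˣ):D), neg (Sp p)⁆
          = ⁅pos ((P^(k:ℤ) : Dˣ):D), pos (Sp p)⁆ - ⁅neg ((P^(k:ℤ) : Dˣ):D), neg (Sp p)⁆ := by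
        nth_rewrite 1 [← hsplit (Sp p)]
        nth_rewrite 2 [← hsplit ((P^(k:ℤ) : Dˣ):D)]
        rw [lie_add, add_lie]
        abel
      have h2 := congrArg pos expand
      rw [hpos_sub, hpos_sub, hposlie_pp, hposlie_nn, sub_zero] at h2
      rw [sub_eq_iff_eq_add] at h2
      rw [h2, add_comm]
    rw [key, add_lie, leibniz_lie (pos (Sp p)) (pos ((P^(k:ℤ) : Dˣ):D)) (↑L:D),
      show ⁅⁅pos ((P^(k:ℤ) : Dˣ):D), pos (Sp p)⁆, (↑L:D)⁆ = -⁅⁅pos (Sp p), pos ((P^(k:ℤ) : Dˣ):D)⁆, (↑L:D)⁆ from by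
        rw [← neg_lie, lie_skew]]
    abel
  · -- conclusion (ii)
    intro p q hp' hq'
    have e1 : s p (s q (↑L:D))
        = ⁅pos (s p (Sp q)), (↑L:D)⁆ + ⁅pos (Sp q), ⁅pos (Sp p), (↑L:D)⁆⁆ := by
      rw [hsL q hq', der_lie (s p) (hs_add p) (hs_mul p), hs_pos, hsL p hp']
    have e2 : s q (s p (↑L:D))
        = ⁅pos (s q (Sp p)), (↑L:D)⁆ + ⁅pos (Sp p), ⁅pos (Sp q), (↑L:D)⁆⁆ := by
      rw [hsL p hp', der_lie (s q) (hs_add q) (hs_mul q), hs_pos, hsL q hq']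
    have hDelta : s p (Sp q) - s q (Sp p)
        = ((q-p:ℤ):ℚ) • Sp (p+q) + ⁅pos (Sp p), pos (Sp q)⁆ - ⁅neg (Sp p), neg (Sp q)⁆ := by
      rw [hsSp p hp' q, hsSp q hq' p, hnegdef (Sp p), hnegdef (Sp q),
        hSpC p, hSpC q, hSpC (p+q)]
      simp only [lie_add, add_lie, lie_sub, sub_lie, smul_add]
      rw [Hc1c1 p q, Hc1c1 q p, Hc2c2 p q]
      simp only [show q + p = p + q from add_comm q p]
      rw [← lie_skew ((n:ℚ)⁻¹ • (M * ((P^((n:ℤ)*(q)+1) : Dˣ):D))) (Mh * ((L^((p)-1) : Dˣ):D)),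
        ← lie_skew ((n:ℚ)⁻¹ • (M * ((P^((n:ℤ)*(q)+1) : Dˣ):D))) (pos ((n:ℚ)⁻¹ • (M * ((P^((n:ℤ)*(p)+1) : Dˣ):D)) + Mh * ((L^((p)-1) : Dˣ):D))),
        ← lie_skew (pos ((n:ℚ)⁻¹ • (M * ((P^((n:ℤ)*(q)+1) : Dˣ):D)) + Mh * ((L^((q)-1) : Dˣ):D))) (Mh * ((L^((p)-1) : Dˣ):D))]
      push_cast
      module
    have posD : pos (s p (Sp q)) - pos (s q (Sp p))
        = ((q-p:ℤ):ℚ) • pos (Sp (p+q)) + ⁅pos (Sp p), pos (Sp q)⁆ := by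
      have h := congrArg pos hDelta
      rw [← hpos_sub, h, hpos_sub, hpos_add, hpos_smul, hposlie_pp, hposlie_nn, sub_zero]
    have lhs_eq : ⁅pos (s p (Sp q)), (↑L:D)⁆ + ⁅pos (Sp q), ⁅pos (Sp p), (↑L:D)⁆⁆
        - (⁅pos (s q (Sp p)), (↑L:D)⁆ + ⁅pos (Sp p), ⁅pos (Sp q), (↑L:D)⁆⁆)
        = ((q-p:ℤ):ℚ) • ⁅pos (Sp (p+q)), (↑L:D)⁆ := by
      have hsub : ⁅pos (s p (Sp q)), (↑L:D)⁆ - ⁅pos (s q (Sp p)), (↑L:D)⁆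
          = ((q-p:ℤ):ℚ) • ⁅pos (Sp (p+q)), (↑L:D)⁆ + ⁅⁅pos (Sp p), pos (Sp q)⁆, (↑L:D)⁆ := by
        rw [← sub_lie, posD, add_lie, smul_lie]
      have hjac : ⁅pos (Sp q), ⁅pos (Sp p), (↑L:D)⁆⁆ - ⁅pos (Sp p), ⁅pos (Sp q), (↑L:D)⁆⁆
          = ⁅⁅pos (Sp q), pos (Sp p)⁆, (↑L:D)⁆ := by
        rw [leibniz_lie]; abel
      have hskew : ⁅⁅pos (Sp p), pos (Sp q)⁆, (↑L:D)⁆ + ⁅⁅pos (Sp q), pos (Sp p)⁆, (↑L:D)⁆ = 0 := by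
        rw [show ⁅pos (Sp q), pos (Sp p)⁆ = -⁅pos (Sp p), pos (Sp q)⁆ from (lie_skew _ _).symm, neg_lie]
        abel
      calc ⁅pos (s p (Sp q)), (↑L:D)⁆ + ⁅pos (Sp q), ⁅pos (Sp p), (↑L:D)⁆⁆
            - (⁅pos (s q (Sp p)), (↑L:D)⁆ + ⁅pos (Sp p), ⁅pos (Sp q), (↑L:D)⁆⁆)
          = (⁅pos (s p (Sp q)), (↑L:D)⁆ - ⁅pos (s q (Sp p)), (↑L:D)⁆)
            + (⁅pos (Sp q), ⁅pos (Sp p), (↑L:D)⁆⁆ - ⁅pos (Sp p), ⁅pos (Sp q), (↑L:D)⁆⁆) := by abel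
        _ = ((q-p:ℤ):ℚ) • ⁅pos (Sp (p+q)), (↑L:D)⁆
            + ⁅⁅pos (Sp p), pos (Sp q)⁆, (↑L:D)⁆ + ⁅⁅pos (Sp q), pos (Sp p)⁆, (↑L:D)⁆ := by
            rw [hsub, hjac]
        _ = ((q-p:ℤ):ℚ) • ⁅pos (Sp (p+q)), (↑L:D)⁆ := by
            rw [add_assoc, hskew, add_zero]
    rw [e1, e2, lhs_eq]
    by_cases hpq : -1 ≤ p + q
    · rw [hsL (p+q) hpq, Int.cast_smul_eq_zsmul]
    · have hp1 : p = -1 := by omega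
      have hq1 : q = -1 := by omega
      subst hp1
      subst hq1
      simp
end
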